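/- With the restricted ultrapower setup, if U is a complete and definable ultrafilter on P_𝔛, then Cod(N/M) ⊆ 𝔛, where N = ∏_𝔛 K / U: for every [f] ∈ N the set set_{N/M}([f]) = {a ∈ M : N ⊨ a ∈ [f]} belongs to 𝔛. -/

import Mathlib

namespace Paper

/-! ### Syntax of (second-order) arithmetic.

Terms of the language `L_A = {0, 1, +, ·, <}`, with number variables indexed by `ℕ`.
Formulas also allow atomic formulas `t ∈ X_k` (membership in a set variable) and
set quantifiers `allS`; first-order formulas are those avoiding both. -/

inductive PTerm where
  | var : ℕ → PTerm
  | zero : PTerm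
  | one : PTerm
  | add : PTerm → PTerm → PTerm
  | mul : PTerm → PTerm → PTerm

inductive Fml where
  | eq : PTerm → PTerm → Fml
  | lt : PTerm → PTerm → Fml
  | mem : PTerm → ℕ → Fml
  | not : Fml → Fml
  | imp : Fml → Fml → Fml
  | all : ℕ → Fml → Fml
  | allS : ℕ → Fml → Fml

def Fml.and (φ ψ : Fml) : Fml := .not (.imp φ (.not ψ))
def Fml.or (φ ψ : Fml) : Fml := .imp (.not φ) ψ
def Fml.iff (φ ψ : Fml) : Fml := (Fml.imp φ ψ).and (Fml.imp ψ φ)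
def Fml.ex (x : ℕ) (φ : Fml) : Fml := .not (.all x (.not φ))
def Fml.exS (k : ℕ) (φ : Fml) : Fml := .not (.allS k (.not φ))

/-- A structure for the language `{0, 1, +, ·, <}` on a carrier `M`
(bundled, so that several structures can live on the same carrier). -/
structure AStr (M : Type) where
  zero : M
  one : M
  add : M → M → M
  mul : M → M → M
  lt : M → M → Prop

/-- The standard model of arithmetic. -/
def natStr : AStr ℕ := ⟨0, 1, (· + ·), (· * ·), (· < ·)⟩

namespace PTerm

def vars : PTerm → Finset ℕ
  | var n => {n}
  | zero => ∅
  | one => ∅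
  | add t u => t.vars ∪ u.vars
  | mul t u => t.vars ∪ u.vars

/-- Substitution of a term `r` for the variable `x` (used only with `r` closed or
with `vars r ⊆ {x}`, in which case it is capture-free). -/
def subst (x : ℕ) (r : PTerm) : PTerm → PTerm
  | var n => if n = x then r else var n
  | zero => zero
  | one => one
  | add t u => add (subst x r t) (subst x r u)
  | mul t u => mul (subst x r t) (subst x r u)

def val {M : Type} (S : AStr M) (v : ℕ → M) : PTerm → M
  | var n => v n
  | zero => S.zero
  | one => S.one
  | add t u => S.add (t.val S v) (u.val S v)
  | mul t u => S.mul (t.val S v) (u.val S v)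

end PTerm

namespace Fml

/-- Free number variables. -/
def freeN : Fml → Finset ℕ
  | eq t u => t.vars ∪ u.vars
  | lt t u => t.vars ∪ u.vars
  | mem t _ => t.vars
  | not φ => φ.freeN
  | imp φ ψ => φ.freeN ∪ ψ.freeN
  | all x φ => φ.freeN.erase x
  | allS _ φ => φ.freeN

/-- Substitution of a term `r` for the (free) variable `x`. -/
def substN (x : ℕ) (r : PTerm) : Fml → Fml
  | eq t u => eq (PTerm.subst x r t) (PTerm.subst x r u)
  | lt t u => lt (PTerm.subst x r t) (PTerm.subst x r u)
  | mem t k => mem (PTerm.subst x r t) k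
  | not φ => not (substN x r φ)
  | imp φ ψ => imp (substN x r φ) (substN x r ψ)
  | all y φ => if y = x then all y φ else all y (substN x r φ)
  | allS k φ => allS k (substN x r φ)

/-- First-order formulas: no set variables, no set quantifiers. -/
def IsFO : Fml → Prop
  | eq _ _ => True
  | lt _ _ => True
  | mem _ _ => False
  | not φ => φ.IsFO
  | imp φ ψ => φ.IsFO ∧ ψ.IsFO
  | all _ φ => φ.IsFO
  | allS _ _ => False

/-- Arithmetical formulas: set variables allowed as parameters, but no set quantifiers. -/
def IsArith : Fml → Prop
  | eq _ _ => True
  | lt _ _ => True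
  | mem _ _ => True
  | not φ => φ.IsArith
  | imp φ ψ => φ.IsArith ∧ ψ.IsArith
  | all _ φ => φ.IsArith
  | allS _ _ => False

end Fml

/-! ### Satisfaction -/

/-- Satisfaction for a second-order structure `(M, 𝔛)`: number quantifiers range over `M`,
set quantifiers range over `𝔛`. -/
def Sat {M : Type} (S : AStr M) (𝔛 : Set (Set M)) : (ℕ → M) → (ℕ → Set M) → Fml → Prop
  | v, _, .eq t u => t.val S v = u.val S v
  | v, _, .lt t u => S.lt (t.val S v) (u.val S v)
  | v, w, .mem t k => t.val S v ∈ w k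
  | v, w, .not φ => ¬ Sat S 𝔛 v w φ
  | v, w, .imp φ ψ => Sat S 𝔛 v w φ → Sat S 𝔛 v w ψ
  | v, w, .all x φ => ∀ a : M, Sat S 𝔛 (Function.update v x a) w φ
  | v, w, .allS k φ => ∀ X ∈ 𝔛, Sat S 𝔛 v (Function.update w k X) φ

/-- First-order satisfaction. -/
def SatFO {M : Type} (S : AStr M) (v : ℕ → M) (φ : Fml) : Prop :=
  Sat S Set.univ v (fun _ => ∅) φ

/-- `M ⊨ T` for a first-order theory `T`. -/
def ModelsT {M : Type} (S : AStr M) (T : Set Fml) : Prop :=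
  ∀ φ ∈ T, ∀ v, SatFO S v φ

/-- Semantic consequence (equivalently, by the completeness theorem, provability). -/
def Proves (T : Set Fml) (φ : Fml) : Prop :=
  ∀ (M : Type) (S : AStr M), ModelsT S T → ∀ v, SatFO S v φ

/-- Consistency (equivalently, by the completeness theorem, having a model). -/
def ConsistentT (T : Set Fml) : Prop :=
  ∃ (M : Type) (S : AStr M), ModelsT S T

def IsFOSentence (φ : Fml) : Prop := φ.IsFO ∧ φ.freeN = ∅

/-- Completeness of a theory. -/
def CompleteT (T : Set Fml) : Prop :=
  ∀ φ, IsFOSentence φ → (Proves T φ ∨ Proves T φ.not)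

/-! ### Peano arithmetic -/

def numeral : ℕ → PTerm
  | 0 => .zero
  | n + 1 => .add (numeral n) .one

def univClosure (φ : Fml) : Fml := (φ.freeN.sort (· ≤ ·)).foldr Fml.all φ

/-- The induction axiom for `φ` in the variable `x` (before taking universal closure). -/
def indFml (φ : Fml) (x : ℕ) : Fml :=
  .imp ((φ.substN x .zero).and (.all x (.imp φ (φ.substN x (.add (.var x) .one)))))
    (.all x φ)

/-- The axioms of first-order Peano arithmetic `PA`. -/
def PAax : Set Fml :=
  {Fml.all 0 (.not (.eq (.add (.var 0) .one) .zero)),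
   Fml.all 0 (.all 1 (.imp (.eq (.add (.var 0) .one) (.add (.var 1) .one))
     (.eq (.var 0) (.var 1)))),
   Fml.all 0 (.eq (.add (.var 0) .zero) (.var 0)),
   Fml.all 0 (.all 1 (.eq (.add (.var 0) (.add (.var 1) .one))
     (.add (.add (.var 0) (.var 1)) .one))),
   Fml.all 0 (.eq (.mul (.var 0) .zero) .zero),
   Fml.all 0 (.all 1 (.eq (.mul (.var 0) (.add (.var 1) .one))
     (.add (.mul (.var 0) (.var 1)) (.var 0)))),
   Fml.all 0 (.all 1 (Fml.iff (.lt (.var 0) (.var 1))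
     (Fml.ex 2 (.eq (.add (.var 0) (.add (.var 2) .one)) (.var 1)))))} ∪
  {ψ | ∃ φ x, Fml.IsFO φ ∧ ψ = univClosure (indFml φ x)}

/-! ### Gödel coding -/

/-- The Cantor pairing function (the canonical pairing `⟨·,·⟩`). -/
def cpair (a b : ℕ) : ℕ := (a + b) * (a + b + 1) / 2 + a

def PTerm.code : PTerm → ℕ
  | .var n => cpair 0 n
  | .zero => cpair 1 0
  | .one => cpair 2 0
  | .add t u => cpair 3 (cpair t.code u.code)
  | .mul t u => cpair 4 (cpair t.code u.code)

def Fml.code : Fml → ℕ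
  | .eq t u => cpair 5 (cpair t.code u.code)
  | .lt t u => cpair 6 (cpair t.code u.code)
  | .not φ => cpair 7 φ.code
  | .imp φ ψ => cpair 8 (cpair φ.code ψ.code)
  | .all x φ => cpair 9 (cpair x φ.code)
  | .mem t k => cpair 10 (cpair t.code k)
  | .allS k φ => cpair 11 (cpair k φ.code)

/-- A theory identified with its set of Gödel codes. -/
def theoryCode (T : Set Fml) : Set ℕ := Fml.code '' T

/-! ### The arithmetical hierarchy (syntactic classes) -/

inductive IsDelta0 : Fml → Prop
  | eq (t u) : IsDelta0 (.eq t u)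
  | lt (t u) : IsDelta0 (.lt t u)
  | mem (t k) : IsDelta0 (.mem t k)
  | not {φ} : IsDelta0 φ → IsDelta0 φ.not
  | imp {φ ψ} : IsDelta0 φ → IsDelta0 ψ → IsDelta0 (φ.imp ψ)
  | ball {φ} (x t) : x ∉ PTerm.vars t → IsDelta0 φ →
      IsDelta0 (.all x (.imp (.lt (.var x) t) φ))

def IsSigma01 (φ : Fml) : Prop := ∃ x ψ, IsDelta0 ψ ∧ φ = Fml.ex x ψ

def IsPi01 (φ : Fml) : Prop := ∃ x ψ, IsDelta0 ψ ∧ φ = Fml.all x ψ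

/-! ### Subsystems of second-order arithmetic, semantically -/

/-- The basic axioms (`PA⁻`, a discretely ordered commutative semiring). -/
def PAminusSem {M : Type} (S : AStr M) : Prop :=
  (∀ a b c : M, S.add a (S.add b c) = S.add (S.add a b) c) ∧
  (∀ a b : M, S.add a b = S.add b a) ∧
  (∀ a b c : M, S.mul a (S.mul b c) = S.mul (S.mul a b) c) ∧
  (∀ a b : M, S.mul a b = S.mul b a) ∧
  (∀ a b c : M, S.mul a (S.add b c) = S.add (S.mul a b) (S.mul a c)) ∧
  (∀ a : M, S.add a S.zero = a) ∧
  (∀ a : M, S.mul a S.zero = S.zero) ∧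
  (∀ a : M, S.mul a S.one = a) ∧
  (∀ a b c : M, S.lt a b → S.lt b c → S.lt a c) ∧
  (∀ a : M, ¬ S.lt a a) ∧
  (∀ a b : M, S.lt a b ∨ a = b ∨ S.lt b a) ∧
  (∀ a b c : M, S.lt a b → S.lt (S.add a c) (S.add b c)) ∧
  (∀ a b c : M, S.lt S.zero c → S.lt a b → S.lt (S.mul a c) (S.mul b c)) ∧
  (∀ a b : M, S.lt a b → ∃ c : M, S.add a c = b) ∧
  S.lt S.zero S.one ∧
  (∀ a : M, S.lt S.zero a → a = S.one ∨ S.lt S.one a) ∧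
  (∀ a : M, a = S.zero ∨ S.lt S.zero a)

/-- `(M,𝔛)` satisfies the induction axiom for `φ` in the variable `x`
(with arbitrary number and set parameters). -/
def SatInd {M : Type} (S : AStr M) (𝔛 : Set (Set M)) (φ : Fml) (x : ℕ) : Prop :=
  ∀ (v : ℕ → M) (w : ℕ → Set M), (∀ k, w k ∈ 𝔛) →
    (Sat S 𝔛 (Function.update v x S.zero) w φ ∧
      ∀ a, Sat S 𝔛 (Function.update v x a) w φ →
        Sat S 𝔛 (Function.update v x (S.add a S.one)) w φ) →
    ∀ a, Sat S 𝔛 (Function.update v x a) w φ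

/-- `(M,𝔛) ⊨ RCA₀`: basic axioms, `Σ⁰₁` induction and `Δ⁰₁` comprehension. -/
def SatRCA0 {M : Type} (S : AStr M) (𝔛 : Set (Set M)) : Prop :=
  PAminusSem S ∧
  (∀ φ x, IsSigma01 φ → SatInd S 𝔛 φ x) ∧
  (∀ φ ψ x, IsSigma01 φ → IsPi01 ψ →
    ∀ (v : ℕ → M) (w : ℕ → Set M), (∀ k, w k ∈ 𝔛) →
      (∀ a, Sat S 𝔛 (Function.update v x a) w φ ↔ Sat S 𝔛 (Function.update v x a) w ψ) →
      {a : M | Sat S 𝔛 (Function.update v x a) w φ} ∈ 𝔛)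

/-- `(M,𝔛) ⊨ ACA₀`: basic axioms, the induction axiom and arithmetical comprehension. -/
def SatACA0 {M : Type} (S : AStr M) (𝔛 : Set (Set M)) : Prop :=
  PAminusSem S ∧
  (∀ X ∈ 𝔛, S.zero ∈ X → (∀ a, a ∈ X → S.add a S.one ∈ X) → ∀ a, a ∈ X) ∧
  (∀ φ x, Fml.IsArith φ → ∀ (v : ℕ → M) (w : ℕ → Set M), (∀ k, w k ∈ 𝔛) →
    {a : M | Sat S 𝔛 (Function.update v x a) w φ} ∈ 𝔛)

/-! ### Arithmetization inside a model

All notions below unfold the standard (`Δ₀`/`Σ₁`) arithmetized definitions at the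
meta-level, using the operations of a structure `S : AStr M`.  On models of `IΣ₁`
they agree with satisfaction of the corresponding arithmetic formulas. -/

namespace AStr

variable {M : Type} (S : AStr M)

/-- Interpretation of numerals. -/
def num : ℕ → M
  | 0 => S.zero
  | n + 1 => S.add (num n) S.one

def le (a b : M) : Prop := S.lt a b ∨ a = b

def two : M := S.add S.one S.one

/-- `p = ⟨a,b⟩` for the Cantor pairing function: `2p = (a+b)(a+b+1) + 2a`. -/
def PairRel (p a b : M) : Prop :=
  S.mul S.two p = S.add (S.mul (S.add a b) (S.add (S.add a b) S.one)) (S.mul S.two a)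

/-- `r = a mod m`. -/
def ModRel (a m r : M) : Prop := S.lt r m ∧ ∃ q, a = S.add (S.mul q m) r

/-- Gödel's β-function: `x = β(c, i)` where `c = ⟨a,b⟩` and `x = a mod (1 + (i+1)b)`. -/
def BetaRel (c i x : M) : Prop :=
  ∃ a b, S.PairRel c a b ∧ S.ModRel a (S.add S.one (S.mul (S.add i S.one) b)) x

/-- `s` codes a sequence of length `l` (as `s = ⟨c, l⟩`). -/
def SeqLen (s l : M) : Prop := ∃ c, S.PairRel s c l

/-- The `i`-th entry of the sequence coded by `s` is `x`. -/
def SeqAt (s i x : M) : Prop := ∃ c l, S.PairRel s c l ∧ S.lt i l ∧ S.BetaRel c i x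

/-- The fixed `Δ₀` coding formula `x ∈ y` for (bounded) sets:
`y = ⟨a,b⟩` and `a mod (1 + (x+1)b) = 1` with modulus `> 1`, and `x < y`. -/
def MemRel (x y : M) : Prop :=
  S.lt x y ∧ ∃ a b, S.PairRel y a b ∧
    S.lt S.one (S.add S.one (S.mul (S.add x S.one) b)) ∧
    S.ModRel a (S.add S.one (S.mul (S.add x S.one) b)) S.one

/-- Tagged pairs, used for codes of syntax: `x = ⟨tag, payload⟩`. -/
def Node (x tag payload : M) : Prop := S.PairRel x tag payload

/-- `x` is the code of the variable `v`. -/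
def VarC (v x : M) : Prop := S.Node x (S.num 0) v

def AddC (t u y : M) : Prop := ∃ p, S.PairRel p t u ∧ S.Node y (S.num 3) p
def MulC (t u y : M) : Prop := ∃ p, S.PairRel p t u ∧ S.Node y (S.num 4) p
def EqC (t u y : M) : Prop := ∃ p, S.PairRel p t u ∧ S.Node y (S.num 5) p
def LtC (t u y : M) : Prop := ∃ p, S.PairRel p t u ∧ S.Node y (S.num 6) p
def NotC (x y : M) : Prop := S.Node y (S.num 7) x
def ImpC (x y z : M) : Prop := ∃ p, S.PairRel p x y ∧ S.Node z (S.num 8) p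
def AllC (v x y : M) : Prop := ∃ p, S.PairRel p v x ∧ S.Node y (S.num 9) p

/-- `s` codes a construction sequence for terms. -/
def IsTermConSeq (s : M) : Prop :=
  ∀ i x, S.SeqAt s i x →
    (∃ v, S.VarC v x) ∨ S.Node x (S.num 1) (S.num 0) ∨ S.Node x (S.num 2) (S.num 0) ∨
    (∃ j k y z, S.lt j i ∧ S.lt k i ∧ S.SeqAt s j y ∧ S.SeqAt s k z ∧
      (S.AddC y z x ∨ S.MulC y z x))

/-- `x` is a term code (in the sense of `M`, possibly nonstandard). -/
def TermCodeM (x : M) : Prop := ∃ s i, S.IsTermConSeq s ∧ S.SeqAt s i x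

/-- `s` codes a construction sequence for (first-order) formulas. -/
def IsFmlConSeq (s : M) : Prop :=
  ∀ i x, S.SeqAt s i x →
    (∃ t u, S.TermCodeM t ∧ S.TermCodeM u ∧ (S.EqC t u x ∨ S.LtC t u x)) ∨
    (∃ j y, S.lt j i ∧ S.SeqAt s j y ∧ S.NotC y x) ∨
    (∃ j k y z, S.lt j i ∧ S.lt k i ∧ S.SeqAt s j y ∧ S.SeqAt s k z ∧ S.ImpC y z x) ∨
    (∃ j v y, S.lt j i ∧ S.SeqAt s j y ∧ S.AllC v y x)

/-- `x` is a formula code (in the sense of `M`, possibly nonstandard). -/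
def FmlCodeM (x : M) : Prop := ∃ s i, S.IsFmlConSeq s ∧ S.SeqAt s i x

/-- Construction sequences of pairs (term code, occurrence flag for the variable `v`). -/
def IsOccConSeq (v s : M) : Prop :=
  ∀ i p, S.SeqAt s i p → ∃ x f, S.PairRel p x f ∧
    ((S.VarC v x ∧ f = S.num 1) ∨
     (∃ u, S.VarC u x ∧ u ≠ v ∧ f = S.num 0) ∨
     ((S.Node x (S.num 1) (S.num 0) ∨ S.Node x (S.num 2) (S.num 0)) ∧ f = S.num 0) ∨
     (∃ j k y z g h pj pk, S.lt j i ∧ S.lt k i ∧ S.SeqAt s j pj ∧ S.SeqAt s k pk ∧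
       S.PairRel pj y g ∧ S.PairRel pk z h ∧ (S.AddC y z x ∨ S.MulC y z x) ∧
       ((f = S.num 1 ∧ (g = S.num 1 ∨ h = S.num 1)) ∨
        (f = S.num 0 ∧ g = S.num 0 ∧ h = S.num 0))))

/-- `f = 1` iff the variable `v` occurs in the term coded by `t` (`f ∈ {0,1}`). -/
def OccT (v t f : M) : Prop :=
  ∃ s i p, S.IsOccConSeq v s ∧ S.SeqAt s i p ∧ S.PairRel p t f

/-- Construction sequences of pairs (formula code, freeness flag for the variable `v`). -/
def IsFreeConSeq (v s : M) : Prop :=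
  ∀ i p, S.SeqAt s i p → ∃ x f, S.PairRel p x f ∧
    ((∃ t u, (S.EqC t u x ∨ S.LtC t u x) ∧
       ((f = S.num 1 ∧ (S.OccT v t (S.num 1) ∨ S.OccT v u (S.num 1))) ∨
        (f = S.num 0 ∧ S.OccT v t (S.num 0) ∧ S.OccT v u (S.num 0)))) ∨
     (∃ j y g pj, S.lt j i ∧ S.SeqAt s j pj ∧ S.PairRel pj y g ∧ S.NotC y x ∧ f = g) ∨
     (∃ j k y z g h pj pk, S.lt j i ∧ S.lt k i ∧ S.SeqAt s j pj ∧ S.SeqAt s k pk ∧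
       S.PairRel pj y g ∧ S.PairRel pk z h ∧ S.ImpC y z x ∧
       ((f = S.num 1 ∧ (g = S.num 1 ∨ h = S.num 1)) ∨
        (f = S.num 0 ∧ g = S.num 0 ∧ h = S.num 0))) ∨
     (∃ j w y g pj, S.lt j i ∧ S.SeqAt s j pj ∧ S.PairRel pj y g ∧ S.AllC w y x ∧
       ((w = v ∧ f = S.num 0) ∨ (w ≠ v ∧ f = g))))

/-- `f = 1` iff the variable `v` is free in the formula coded by `φ`. -/
def FreeF (v φ f : M) : Prop :=
  ∃ s i p, S.IsFreeConSeq v s ∧ S.SeqAt s i p ∧ S.PairRel p φ f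

/-- Construction sequences of pairs (term code, result of substituting `t` for `v`). -/
def IsSubTConSeq (v t s : M) : Prop :=
  ∀ i p, S.SeqAt s i p → ∃ x x', S.PairRel p x x' ∧
    ((S.VarC v x ∧ x' = t) ∨
     (∃ u, S.VarC u x ∧ u ≠ v ∧ x' = x) ∨
     ((S.Node x (S.num 1) (S.num 0) ∨ S.Node x (S.num 2) (S.num 0)) ∧ x' = x) ∨
     (∃ j k y z y' z' pj pk, S.lt j i ∧ S.lt k i ∧ S.SeqAt s j pj ∧ S.SeqAt s k pk ∧
       S.PairRel pj y y' ∧ S.PairRel pk z z' ∧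
       ((S.AddC y z x ∧ S.AddC y' z' x') ∨ (S.MulC y z x ∧ S.MulC y' z' x'))))

/-- Substitution of the term (code) `t` for the variable `v` in terms: `x' = x[t/v]`. -/
def SubT (v t x x' : M) : Prop :=
  ∃ s i p, S.IsSubTConSeq v t s ∧ S.SeqAt s i p ∧ S.PairRel p x x'

/-- Construction sequences for capture-free substitution in formulas. -/
def IsSubFConSeq (v t s : M) : Prop :=
  ∀ i p, S.SeqAt s i p → ∃ x x', S.PairRel p x x' ∧
    ((∃ a b a' b', S.SubT v t a a' ∧ S.SubT v t b b' ∧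
       ((S.EqC a b x ∧ S.EqC a' b' x') ∨ (S.LtC a b x ∧ S.LtC a' b' x'))) ∨
     (∃ j y y' pj, S.lt j i ∧ S.SeqAt s j pj ∧ S.PairRel pj y y' ∧
       S.NotC y x ∧ S.NotC y' x') ∨
     (∃ j k y z y' z' pj pk, S.lt j i ∧ S.lt k i ∧ S.SeqAt s j pj ∧ S.SeqAt s k pk ∧
       S.PairRel pj y y' ∧ S.PairRel pk z z' ∧ S.ImpC y z x ∧ S.ImpC y' z' x') ∨
     (∃ w y, S.AllC w y x ∧
       ((w = v ∧ x' = x) ∨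
        (w ≠ v ∧ (S.OccT w t (S.num 0) ∨ S.FreeF v y (S.num 0)) ∧
          ∃ j y' pj, S.lt j i ∧ S.SeqAt s j pj ∧ S.PairRel pj y y' ∧ S.AllC w y' x'))))

/-- Capture-free substitution in formulas: `x' = x[t/v]`, with `t` substitutable for `v`. -/
def SubF (v t x x' : M) : Prop :=
  ∃ s i p, S.IsSubFConSeq v t s ∧ S.SeqAt s i p ∧ S.PairRel p x x'

/-- `x` is (the code of) a generalization `∀v₁ ⋯ ∀vₖ y` of `y`. -/
def GenOf (y x : M) : Prop :=
  ∃ s i, S.SeqAt s (S.num 0) y ∧ S.SeqAt s i x ∧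
    ∀ j z z', S.SeqAt s j z → S.SeqAt s (S.add j S.one) z' → S.le (S.add j S.one) i →
      ∃ v, S.AllC v z z'

/-- Codes of instances of the logical axiom schemes (a Hilbert-style calculus with
modus ponens as the only rule; axioms are taken together with their generalizations). -/
def LogAxCore (x : M) : Prop :=
  -- A1 : a → (b → a)
  (∃ a b y, S.FmlCodeM a ∧ S.FmlCodeM b ∧ S.ImpC b a y ∧ S.ImpC a y x) ∨
  -- A2 : (a → (b → c)) → ((a → b) → (a → c))
  (∃ a b c bc abc ab ac r, S.FmlCodeM a ∧ S.FmlCodeM b ∧ S.FmlCodeM c ∧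
    S.ImpC b c bc ∧ S.ImpC a bc abc ∧ S.ImpC a b ab ∧ S.ImpC a c ac ∧
    S.ImpC ab ac r ∧ S.ImpC abc r x) ∨
  -- A3 : (¬b → ¬a) → (a → b)
  (∃ a b na nb l r, S.FmlCodeM a ∧ S.FmlCodeM b ∧ S.NotC a na ∧ S.NotC b nb ∧
    S.ImpC nb na l ∧ S.ImpC a b r ∧ S.ImpC l r x) ∨
  -- A4 : ∀v a → a[t/v]
  (∃ v t a a' al, S.TermCodeM t ∧ S.FmlCodeM a ∧ S.AllC v a al ∧ S.SubF v t a a' ∧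
    S.ImpC al a' x) ∨
  -- A5 : ∀v (a → b) → (∀v a → ∀v b)
  (∃ v a b ab alab ala alb r, S.FmlCodeM a ∧ S.FmlCodeM b ∧ S.ImpC a b ab ∧
    S.AllC v ab alab ∧ S.AllC v a ala ∧ S.AllC v b alb ∧ S.ImpC ala alb r ∧
    S.ImpC alab r x) ∨
  -- A6 : a → ∀v a, for v not free in a
  (∃ v a ala, S.FmlCodeM a ∧ S.FreeF v a (S.num 0) ∧ S.AllC v a ala ∧ S.ImpC a ala x) ∨
  -- E1 : t = t
  (∃ t, S.TermCodeM t ∧ S.EqC t t x) ∨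
  -- E2 : u = w → w = u (variables)
  (∃ u w vu vw e1 e2, S.VarC u vu ∧ S.VarC w vw ∧ S.EqC vu vw e1 ∧ S.EqC vw vu e2 ∧
    S.ImpC e1 e2 x) ∨
  -- E3 : u = w → (w = z → u = z) (variables)
  (∃ u w z vu vw vz e1 e2 e3 r, S.VarC u vu ∧ S.VarC w vw ∧ S.VarC z vz ∧
    S.EqC vu vw e1 ∧ S.EqC vw vz e2 ∧ S.EqC vu vz e3 ∧ S.ImpC e2 e3 r ∧ S.ImpC e1 r x) ∨
  -- E4 : congruence of +, ·, < with respect to = (variables)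
  (∃ u1 w1 u2 w2 a1 b1 a2 b2 e1 e2 s1 s2 es r,
    S.VarC u1 a1 ∧ S.VarC w1 b1 ∧ S.VarC u2 a2 ∧ S.VarC w2 b2 ∧
    S.EqC a1 b1 e1 ∧ S.EqC a2 b2 e2 ∧
    ((S.AddC a1 a2 s1 ∧ S.AddC b1 b2 s2 ∧ S.EqC s1 s2 es) ∨
     (S.MulC a1 a2 s1 ∧ S.MulC b1 b2 s2 ∧ S.EqC s1 s2 es) ∨
     (S.LtC a1 a2 s1 ∧ S.LtC b1 b2 s2 ∧ S.ImpC s1 s2 es)) ∧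
    S.ImpC e2 es r ∧ S.ImpC e1 r x) ∨
  -- E5 : congruence of = (variables)
  (∃ u1 w1 u2 w2 a1 b1 a2 b2 e1 e2 d1 d2 inner r,
    S.VarC u1 a1 ∧ S.VarC w1 b1 ∧ S.VarC u2 a2 ∧ S.VarC w2 b2 ∧
    S.EqC a1 b1 e1 ∧ S.EqC a2 b2 e2 ∧ S.EqC a1 a2 d1 ∧ S.EqC b1 b2 d2 ∧
    S.ImpC d1 d2 inner ∧ S.ImpC e2 inner r ∧ S.ImpC e1 r x)

/-- Logical axioms: generalizations of instances of the axiom schemes. -/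
def LogAx (x : M) : Prop := ∃ y, S.LogAxCore y ∧ S.GenOf y x

/-- `s` codes a proof of `φ` from the set `Γ ⊆ M` of (codes of) sentences:
every entry is a logical axiom, a member of `Γ`, or follows by modus ponens. -/
def ProofFrom (Γ : Set M) (s φ : M) : Prop :=
  (∃ i, S.SeqAt s i φ) ∧
  ∀ i x, S.SeqAt s i x →
    S.LogAx x ∨ x ∈ Γ ∨
    (∃ j k y z, S.lt j i ∧ S.lt k i ∧ S.SeqAt s j y ∧ S.SeqAt s k z ∧ S.ImpC y x z)

/-- Provability (in the sense of `M`) from the axiom set `Γ ⊆ M`. -/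
def ProvFrom (Γ : Set M) (φ : M) : Prop := ∃ s, S.ProofFrom Γ s φ

/-- `M ⊨ Con_Γ` : there is no (possibly nonstandard) proof of a contradiction from `Γ`. -/
def ConOf (Γ : Set M) : Prop :=
  ¬ ∃ φ nφ, S.NotC φ nφ ∧ S.ProvFrom Γ φ ∧ S.ProvFrom Γ nφ

/-- `M ⊨ Con_T` for a (standard) theory `T`: `M` thinks every finite subtheory
of `T` is consistent. -/
def SatConTheory (T : Set Fml) : Prop :=
  ∀ F : Finset Fml, ↑F ⊆ T → S.ConOf {x : M | ∃ φ ∈ F, x = S.num (Fml.code φ)}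

/-! ### Coded sets, standard systems, filters on `P_𝔛` -/

/-- `A` is unbounded in `M`. -/
def Unb (A : Set M) : Prop := ∀ b, ∃ a ∈ A, S.lt b a

/-- `P_𝔛`: the collection of unbounded sets in `𝔛` (a partial order under `⊆`). -/
def PX (𝔛 : Set (Set M)) : Set (Set M) := {A | A ∈ 𝔛 ∧ S.Unb A}

/-- The `a`-th slice `(A)_a = {b | ⟨a,b⟩ ∈ A}`. -/
def SliceAt (A : Set M) (a : M) : Set M := {b | ∃ p, S.PairRel p a b ∧ p ∈ A}

/-- A function `M → M` is coded in `𝔛` if its graph (via the canonical pairing)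
belongs to `𝔛`. -/
def CodedFun (𝔛 : Set (Set M)) (f : M → M) : Prop :=
  ∃ G ∈ 𝔛, ∀ a b, f a = b ↔ b ∈ S.SliceAt G a

/-- A family `F` of sets is definable (over `(M,𝔛)`) if `{a | (A)_a ∈ F} ∈ 𝔛`
for every `A ∈ 𝔛`. -/
def DefinableFam (𝔛 F : Set (Set M)) : Prop :=
  ∀ A ∈ 𝔛, {a : M | S.SliceAt A a ∈ F} ∈ 𝔛

/-- `F` is a complete family: every function coded in `𝔛` with bounded range is
constant on some member of `F`. -/
def CompleteOn (𝔛 F : Set (Set M)) : Prop :=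
  ∀ f : M → M, S.CodedFun 𝔛 f → (∃ b, ∀ a, S.lt (f a) b) →
    ∃ A ∈ F, ∀ x ∈ A, ∀ y ∈ A, f x = f y

/-- The standard system `SSy(M)`: standard parts of the `M`-coded sets. -/
def SSy : Set (Set ℕ) := {A | ∃ c : M, ∀ n : ℕ, (n ∈ A ↔ S.MemRel (S.num n) c)}

/-- `M` is nonstandard. -/
def Nonstd : Prop := ∃ a : M, ∀ n : ℕ, a ≠ S.num n

/-- `M` is recursively saturated: every recursive type (in the variable `0`, with
finitely many parameters assigned to the variables `1, …, k`) that is finitely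
realized in `M` is realized in `M`. -/
def RecSat : Prop :=
  ∀ (p : Set Fml) (k : ℕ) (par : ℕ → M),
    (∀ φ ∈ p, Fml.IsFO φ ∧ φ.freeN ⊆ Finset.range (k + 1)) →
    ComputablePred (fun n => ∃ φ ∈ p, Fml.code φ = n) →
    (∀ F : Finset Fml, ↑F ⊆ p →
      ∃ a : M, ∀ φ ∈ F, SatFO S (fun i => if i = 0 then a else par i) φ) →
    ∃ a : M, ∀ φ ∈ p, SatFO S (fun i => if i = 0 then a else par i) φ

/-- `c` is the least code of the (bounded) set `A`. -/
def IsLeastCode (A : Set M) (c : M) : Prop :=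
  (∀ x, S.MemRel x c ↔ x ∈ A) ∧ ∀ c', (∀ x, S.MemRel x c' ↔ x ∈ A) → S.le c c'

/-- `A* = {⟨A ∩ I_{<a}⟩ | a ∈ M}`, the set of least codes of initial segments of `A`. -/
def star (A : Set M) : Set M :=
  {c | ∃ a, S.IsLeastCode (A ∩ {b | S.lt b a}) c}

end AStr

/-! ### Filters and partial orders of sets -/

/-- A filter on a partial order `P` of sets, ordered by inclusion: a proper, nonempty,
upward closed, downward directed subset of `P`. -/
def IsFilterOn {α : Type} (P F : Set (Set α)) : Prop :=
  F ⊆ P ∧ F.Nonempty ∧ F ≠ P ∧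
  (∀ A ∈ F, ∀ B ∈ P, A ⊆ B → B ∈ F) ∧
  (∀ A ∈ F, ∀ B ∈ F, ∃ C ∈ F, C ⊆ A ∧ C ⊆ B)

/-- An ultrafilter on a partial order of sets: a maximal filter. -/
def IsUltraOn {α : Type} (P U : Set (Set α)) : Prop :=
  IsFilterOn P U ∧ ∀ F, IsFilterOn P F → U ⊆ F → F = U

/-- A principal filter on a partial order of sets. -/
def IsPrincipalOn {α : Type} (P U : Set (Set α)) : Prop :=
  ∃ A ∈ P, U = {B | B ∈ P ∧ A ⊆ B}

/-- The countable chain condition for a partial order `P` of sets (ordered by `⊆`):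
every uncountable subset contains two distinct compatible elements. -/
def CCCOn {α : Type} (P : Set (Set α)) : Prop :=
  ∀ A : Set (Set α), A ⊆ P → ¬A.Countable →
    ∃ X ∈ A, ∃ Y ∈ A, X ≠ Y ∧ ∃ Z ∈ P, Z ⊆ X ∧ Z ⊆ Y

/-- `𝔛` is a Boolean algebra of sets. -/
def IsBoolAlg {α : Type} (𝔛 : Set (Set α)) : Prop :=
  Set.univ ∈ 𝔛 ∧ ∅ ∈ 𝔛 ∧
  (∀ A ∈ 𝔛, ∀ B ∈ 𝔛, A ∪ B ∈ 𝔛) ∧ (∀ A ∈ 𝔛, ∀ B ∈ 𝔛, A ∩ B ∈ 𝔛) ∧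
  (∀ A ∈ 𝔛, Aᶜ ∈ 𝔛)

/-- A filter on the Boolean algebra `𝔛`. -/
def IsBAFilter {α : Type} (𝔛 F : Set (Set α)) : Prop :=
  F ⊆ 𝔛 ∧ F.Nonempty ∧ ∅ ∉ F ∧
  (∀ A ∈ F, ∀ B ∈ 𝔛, A ⊆ B → B ∈ F) ∧
  (∀ A ∈ F, ∀ B ∈ F, A ∩ B ∈ F)

/-- An ultrafilter on the Boolean algebra `𝔛`: a maximal filter. -/
def IsBAUltra {α : Type} (𝔛 F : Set (Set α)) : Prop :=
  IsBAFilter 𝔛 F ∧ ∀ G, IsBAFilter 𝔛 G → F ⊆ G → G = F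

/-! ### Scott sets -/

/-- Oracle partial recursive functions: partial recursive in the oracle `O`. -/
inductive RecursiveIn (O : ℕ →. ℕ) : (ℕ →. ℕ) → Prop
  | oracle : RecursiveIn O O
  | zero : RecursiveIn O (pure 0)
  | succ : RecursiveIn O Nat.succ
  | left : RecursiveIn O ↑fun n : ℕ => n.unpair.1
  | right : RecursiveIn O ↑fun n : ℕ => n.unpair.2
  | pair {f g} : RecursiveIn O f → RecursiveIn O g →
      RecursiveIn O fun n => Nat.pair <$> f n <*> g n
  | comp {f g} : RecursiveIn O f → RecursiveIn O g →
      RecursiveIn O fun n => g n >>= f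
  | prec {f g} : RecursiveIn O f → RecursiveIn O g →
      RecursiveIn O (Nat.unpaired fun a n =>
        n.rec (f a) fun y IH => do let i ← IH; g (Nat.pair a (Nat.pair y i)))
  | rfind {f} : RecursiveIn O f →
      RecursiveIn O fun a => Nat.rfind fun n => (fun m => m = 0) <$> f (Nat.pair a n)

/-- The characteristic function of a set of natural numbers. -/
noncomputable def chi (A : Set ℕ) : ℕ →. ℕ :=
  fun n => Part.some (@ite _ (n ∈ A) (Classical.propDecidable _) 1 0)

/-- Turing reducibility: `B ≤_T A`. -/
def TuringLe (B A : Set ℕ) : Prop := RecursiveIn (chi A) (chi B)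

/-- A set of naturals coding a binary tree (codes of finite binary strings,
closed under initial segments). -/
def IsTreeCode (T : Set ℕ) : Prop :=
  (∀ n ∈ T, ∃ l : List Bool, Encodable.encode l = n) ∧
  (∀ l₁ l₂ : List Bool, l₁ <+: l₂ → Encodable.encode l₂ ∈ T → Encodable.encode l₁ ∈ T)

/-- `B` (as the characteristic function of a branch) is an infinite branch of the
binary tree coded by `T`. -/
def IsBranchThrough (B T : Set ℕ) : Prop :=
  ∀ n : ℕ, ∃ l : List Bool, l.length = n ∧
    (∀ i : Fin l.length, (l.get i = true ↔ (i : ℕ) ∈ B)) ∧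
    Encodable.encode l ∈ T

/-- A Scott set: a nonempty Boolean algebra of subsets of `ω` closed under relative
recursion and containing an infinite branch of every infinite binary tree coded in it. -/
def IsScottSet (𝔛 : Set (Set ℕ)) : Prop :=
  𝔛.Nonempty ∧
  (∀ A ∈ 𝔛, ∀ B ∈ 𝔛, A ∪ B ∈ 𝔛) ∧
  (∀ A ∈ 𝔛, Aᶜ ∈ 𝔛) ∧
  (∀ A ∈ 𝔛, ∀ B : Set ℕ, TuringLe B A → B ∈ 𝔛) ∧
  (∀ T ∈ 𝔛, IsTreeCode T → T.Infinite → ∃ B ∈ 𝔛, IsBranchThrough B T)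

/-- The sets represented in the theory `T`. -/
def repSet (T : Set Fml) : Set (Set ℕ) :=
  {A | ∃ φ : Fml, Fml.IsFO φ ∧ φ.freeN ⊆ {0} ∧
    ∀ n : ℕ, (n ∈ A → Proves T (φ.substN 0 (numeral n))) ∧
      (n ∉ A → Proves T (Fml.not (φ.substN 0 (numeral n))))}

/-- Martin's axiom. -/
def MartinsAxiom : Prop :=
  ∀ (P : Type) (_ : PartialOrder P),
    (∀ A : Set P, ¬A.Countable → ∃ x ∈ A, ∃ y ∈ A, x ≠ y ∧ ∃ z, z ≤ x ∧ z ≤ y) →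
    ∀ 𝒟 : Set (Set P), (∀ D ∈ 𝒟, ∀ x : P, ∃ y ∈ D, y ≤ x) →
      Cardinal.mk 𝒟 < Cardinal.continuum →
      ∃ F : Set P, F.Nonempty ∧ (∀ x ∈ F, ∀ y, x ≤ y → y ∈ F) ∧
        (∀ x ∈ F, ∀ y ∈ F, ∃ z ∈ F, z ≤ x ∧ z ≤ y) ∧
        ∀ D ∈ 𝒟, (F ∩ D).Nonempty
section Toolkit
variable {M : Type} {S : AStr M} {X : Set (Set M)} {v : ℕ → M} {w : ℕ → Set M}

@[simp] lemma sat_not {φ} : Sat S X v w (.not φ) ↔ ¬ Sat S X v w φ := by simp [Sat]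
@[simp] lemma sat_imp {φ ψ} : Sat S X v w (.imp φ ψ) ↔ (Sat S X v w φ → Sat S X v w ψ) := by
  simp [Sat]
@[simp] lemma sat_and {φ ψ} : Sat S X v w (φ.and ψ) ↔ (Sat S X v w φ ∧ Sat S X v w ψ) := by
  simp [Fml.and, Sat]
@[simp] lemma sat_or {φ ψ} : Sat S X v w (φ.or ψ) ↔ (Sat S X v w φ ∨ Sat S X v w ψ) := by
  simp [Fml.or, Sat]; tauto
@[simp] lemma sat_all {x φ} : Sat S X v w (.all x φ) ↔ ∀ a, Sat S X (Function.update v x a) w φ := by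
  simp [Sat]
@[simp] lemma sat_ex {x φ} : Sat S X v w (.ex x φ) ↔ ∃ a, Sat S X (Function.update v x a) w φ := by
  simp [Fml.ex, Sat]
@[simp] lemma sat_eq {t u} : Sat S X v w (.eq t u) ↔ t.val S v = u.val S v := by simp [Sat]
@[simp] lemma sat_lt {t u} : Sat S X v w (.lt t u) ↔ S.lt (t.val S v) (u.val S v) := by simp [Sat]
@[simp] lemma sat_mem {t k} : Sat S X v w (.mem t k) ↔ t.val S v ∈ w k := by simp [Sat]

lemma PTerm.val_update {t : PTerm} {k : ℕ} {x : M} (h : k ∉ t.vars) :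
    t.val S (Function.update v k x) = t.val S v := by
  induction t with
  | var n => simp [PTerm.vars] at h; simp [PTerm.val, Function.update_of_ne (Ne.symm h)]
  | zero => rfl
  | one => rfl
  | add t u iht ihu =>
      simp [PTerm.vars] at h
      simp [PTerm.val, iht h.1, ihu h.2]
  | mul t u iht ihu =>
      simp [PTerm.vars] at h
      simp [PTerm.val, iht h.1, ihu h.2]

@[simp] lemma vars_numeral (n : ℕ) : (numeral n).vars = ∅ := by
  induction n with
  | zero => rfl
  | succ n ih => simp [numeral, PTerm.vars, ih]

@[simp] lemma val_numeral (n : ℕ) : (numeral n).val S v = S.num n := by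
  induction n with
  | zero => rfl
  | succ n ih => simp [numeral, PTerm.val, ih, AStr.num]

end Toolkit


section Builders
variable {M : Type} {S : AStr M} {X : Set (Set M)} {v : ℕ → M} {w : ℕ → Set M}

/-- `PairRel` as a formula (no quantifiers). -/
def pairF (p a b : PTerm) : Fml :=
  .eq (.mul (.add .one .one) p)
      (.add (.mul (.add a b) (.add (.add a b) .one)) (.mul (.add .one .one) a))

@[simp] lemma sat_pairF {p a b : PTerm} :
    Sat S X v w (pairF p a b) ↔ S.PairRel (p.val S v) (a.val S v) (b.val S v) := by
  simp [pairF, AStr.PairRel, AStr.two, PTerm.val]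

def modF (a m r : PTerm) (q : ℕ) : Fml :=
  (Fml.lt r m).and (.ex q (.eq a (.add (.mul (.var q) m) r)))

lemma sat_modF {a m r : PTerm} {q : ℕ} (ha : q ∉ a.vars) (hm : q ∉ m.vars) (hr : q ∉ r.vars) :
    Sat S X v w (modF a m r q) ↔ S.ModRel (a.val S v) (m.val S v) (r.val S v) := by
  simp only [modF, sat_and, sat_lt, sat_ex, sat_eq, AStr.ModRel]
  refine and_congr Iff.rfl (exists_congr fun z => ?_)
  rw [PTerm.val_update ha, show ((PTerm.add (PTerm.mul (PTerm.var q) m) r).val S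
      (Function.update v q z)) = S.add (S.mul z (m.val S v)) (r.val S v) by
    simp [PTerm.val, PTerm.val_update hm, PTerm.val_update hr]]

def betaF (c i x : PTerm) (b0 : ℕ) : Fml :=
  .ex b0 (.ex (b0+1) ((pairF c (.var b0) (.var (b0+1))).and
    (modF (.var b0) (.add .one (.mul (.add i .one) (.var (b0+1)))) x (b0+2))))

lemma sat_betaF {c i x : PTerm} {b0 : ℕ} (hc : ∀ k ∈ c.vars, k < b0)
    (hi : ∀ k ∈ i.vars, k < b0) (hx : ∀ k ∈ x.vars, k < b0) :
    Sat S X v w (betaF c i x b0) ↔ S.BetaRel (c.val S v) (i.val S v) (x.val S v) := by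
  have hmod : ∀ v' : ℕ → M,
      Sat S X v' w (modF (.var b0) (.add .one (.mul (.add i .one) (.var (b0+1)))) x (b0+2)) ↔
      S.ModRel (v' b0) (S.add S.one (S.mul (S.add (i.val S v') S.one) (v' (b0+1)))) (x.val S v') := by
    intro v'
    rw [sat_modF (by simp [PTerm.vars]; try omega)
      (by simp [PTerm.vars]; try exact fun h => absurd (hi _ h) (by omega))
      (fun h => absurd (hx _ h) (by omega))]
    simp [PTerm.val]
  have hvc : ∀ α β : M, c.val S (Function.update (Function.update v b0 α) (b0+1) β) = c.val S v := by
    intro α β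
    rw [PTerm.val_update (k := b0+1) (fun h => absurd (hc _ h) (by omega)),
        PTerm.val_update (k := b0) (fun h => absurd (hc _ h) (by omega))]
  have hvi : ∀ α β : M, i.val S (Function.update (Function.update v b0 α) (b0+1) β) = i.val S v := by
    intro α β
    rw [PTerm.val_update (k := b0+1) (fun h => absurd (hi _ h) (by omega)),
        PTerm.val_update (k := b0) (fun h => absurd (hi _ h) (by omega))]
  have hvx : ∀ α β : M, x.val S (Function.update (Function.update v b0 α) (b0+1) β) = x.val S v := by
    intro α β
    rw [PTerm.val_update (k := b0+1) (fun h => absurd (hx _ h) (by omega)),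
        PTerm.val_update (k := b0) (fun h => absurd (hx _ h) (by omega))]
  have e0 : (b0 : ℕ) ≠ b0 + 1 := by omega
  simp only [betaF, sat_ex, sat_and, sat_pairF, hmod, AStr.BetaRel, PTerm.val, hvc, hvi, hvx,
    Function.update_of_ne e0, Function.update_self]

def seqLenF (s l : PTerm) (b0 : ℕ) : Fml := .ex b0 (pairF s (.var b0) l)

lemma sat_seqLenF {s l : PTerm} {b0 : ℕ} (hs : ∀ k ∈ s.vars, k < b0)
    (hl : ∀ k ∈ l.vars, k < b0) :
    Sat S X v w (seqLenF s l b0) ↔ S.SeqLen (s.val S v) (l.val S v) := by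
  have hvs : ∀ α : M, s.val S (Function.update v b0 α) = s.val S v := by
    intro α; rw [PTerm.val_update (k := b0) (fun h => absurd (hs _ h) (by omega))]
  have hvl : ∀ α : M, l.val S (Function.update v b0 α) = l.val S v := by
    intro α; rw [PTerm.val_update (k := b0) (fun h => absurd (hl _ h) (by omega))]
  simp only [seqLenF, sat_ex, sat_pairF, AStr.SeqLen, PTerm.val, hvs, hvl, Function.update_self]

def seqAtF (s i x : PTerm) (b0 : ℕ) : Fml :=
  .ex b0 (.ex (b0+1) ((pairF s (.var b0) (.var (b0+1))).and
    ((Fml.lt i (.var (b0+1))).and (betaF (.var b0) i x (b0+2)))))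

lemma sat_seqAtF {s i x : PTerm} {b0 : ℕ} (hs : ∀ k ∈ s.vars, k < b0)
    (hi : ∀ k ∈ i.vars, k < b0) (hx : ∀ k ∈ x.vars, k < b0) :
    Sat S X v w (seqAtF s i x b0) ↔ S.SeqAt (s.val S v) (i.val S v) (x.val S v) := by
  have hbeta : ∀ v' : ℕ → M,
      Sat S X v' w (betaF (.var b0) i x (b0+2)) ↔
      S.BetaRel (v' b0) (i.val S v') (x.val S v') := by
    intro v'
    rw [sat_betaF (by simp [PTerm.vars]; try omega)
      (fun k h => by have := hi _ h; omega) (fun k h => by have := hx _ h; omega)]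
    simp [PTerm.val]
  have hvs : ∀ α β : M, s.val S (Function.update (Function.update v b0 α) (b0+1) β) = s.val S v := by
    intro α β
    rw [PTerm.val_update (k := b0+1) (fun h => absurd (hs _ h) (by omega)),
        PTerm.val_update (k := b0) (fun h => absurd (hs _ h) (by omega))]
  have hvi : ∀ α β : M, i.val S (Function.update (Function.update v b0 α) (b0+1) β) = i.val S v := by
    intro α β
    rw [PTerm.val_update (k := b0+1) (fun h => absurd (hi _ h) (by omega)),
        PTerm.val_update (k := b0) (fun h => absurd (hi _ h) (by omega))]
  have hvx : ∀ α β : M, x.val S (Function.update (Function.update v b0 α) (b0+1) β) = x.val S v := by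
    intro α β
    rw [PTerm.val_update (k := b0+1) (fun h => absurd (hx _ h) (by omega)),
        PTerm.val_update (k := b0) (fun h => absurd (hx _ h) (by omega))]
  have e0 : (b0 : ℕ) ≠ b0 + 1 := by omega
  simp only [seqAtF, sat_ex, sat_and, sat_lt, sat_pairF, hbeta, AStr.SeqAt, PTerm.val, hvs, hvi,
    hvx, Function.update_of_ne e0, Function.update_self]
  all_goals tauto

def memF (x y : PTerm) (b0 : ℕ) : Fml :=
  (Fml.lt x y).and (.ex b0 (.ex (b0+1) ((pairF y (.var b0) (.var (b0+1))).and
    ((Fml.lt .one (.add .one (.mul (.add x .one) (.var (b0+1))))).and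
      (modF (.var b0) (.add .one (.mul (.add x .one) (.var (b0+1)))) .one (b0+2))))))

lemma sat_memF {x y : PTerm} {b0 : ℕ} (hx : ∀ k ∈ x.vars, k < b0)
    (hy : ∀ k ∈ y.vars, k < b0) :
    Sat S X v w (memF x y b0) ↔ S.MemRel (x.val S v) (y.val S v) := by
  have hmod : ∀ v' : ℕ → M,
      Sat S X v' w (modF (.var b0) (.add .one (.mul (.add x .one) (.var (b0+1)))) .one (b0+2)) ↔
      S.ModRel (v' b0) (S.add S.one (S.mul (S.add (x.val S v') S.one) (v' (b0+1)))) S.one := by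
    intro v'
    rw [sat_modF (by simp [PTerm.vars]; try omega)
      (by simp [PTerm.vars]; try exact fun h => absurd (hx _ h) (by omega))
      (by simp [PTerm.vars])]
    simp [PTerm.val]
  have hvx : ∀ α β : M, x.val S (Function.update (Function.update v b0 α) (b0+1) β) = x.val S v := by
    intro α β
    rw [PTerm.val_update (k := b0+1) (fun h => absurd (hx _ h) (by omega)),
        PTerm.val_update (k := b0) (fun h => absurd (hx _ h) (by omega))]
  have hvy : ∀ α β : M, y.val S (Function.update (Function.update v b0 α) (b0+1) β) = y.val S v := by
    intro α β
    rw [PTerm.val_update (k := b0+1) (fun h => absurd (hy _ h) (by omega)),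
        PTerm.val_update (k := b0) (fun h => absurd (hy _ h) (by omega))]
  have e0 : (b0 : ℕ) ≠ b0 + 1 := by omega
  simp only [memF, sat_and, sat_lt, sat_ex, sat_pairF, hmod, AStr.MemRel, PTerm.val, hvx, hvy,
    Function.update_of_ne e0, Function.update_self]
  all_goals tauto

def slMemF (k : ℕ) (a x : PTerm) (q : ℕ) : Fml :=
  .ex q ((pairF (.var q) a x).and (.mem (.var q) k))

lemma sat_slMemF {k q : ℕ} {a x : PTerm} (ha : ∀ j ∈ a.vars, j < q)
    (hx : ∀ j ∈ x.vars, j < q) :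
    Sat S X v w (slMemF k a x q) ↔ (x.val S v) ∈ S.SliceAt (w k) (a.val S v) := by
  simp only [slMemF, sat_ex, sat_and, sat_pairF, sat_mem, AStr.SliceAt, Set.mem_setOf_eq]
  refine exists_congr fun z => ?_
  rw [PTerm.val_update (fun h => absurd (ha _ h) (by omega)),
      PTerm.val_update (fun h => absurd (hx _ h) (by omega))]
  simp [PTerm.val, Function.update_self]

end Builders


section Akit
variable {M : Type} {S : AStr M}

namespace PK
variable (hP : PAminusSem S)
include hP

lemma add_assoc : ∀ a b c : M, S.add a (S.add b c) = S.add (S.add a b) c := hP.1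
lemma add_comm : ∀ a b : M, S.add a b = S.add b a := hP.2.1
lemma mul_assoc : ∀ a b c : M, S.mul a (S.mul b c) = S.mul (S.mul a b) c := hP.2.2.1
lemma mul_comm : ∀ a b : M, S.mul a b = S.mul b a := hP.2.2.2.1
lemma ldistrib : ∀ a b c : M, S.mul a (S.add b c) = S.add (S.mul a b) (S.mul a c) := hP.2.2.2.2.1
lemma add_zero : ∀ a : M, S.add a S.zero = a := hP.2.2.2.2.2.1
lemma mul_zero : ∀ a : M, S.mul a S.zero = S.zero := hP.2.2.2.2.2.2.1
lemma mul_one : ∀ a : M, S.mul a S.one = a := hP.2.2.2.2.2.2.2.1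
lemma lt_trans : ∀ a b c : M, S.lt a b → S.lt b c → S.lt a c := hP.2.2.2.2.2.2.2.2.1
lemma lt_irrefl : ∀ a : M, ¬ S.lt a a := hP.2.2.2.2.2.2.2.2.2.1
lemma tricho : ∀ a b : M, S.lt a b ∨ a = b ∨ S.lt b a := hP.2.2.2.2.2.2.2.2.2.2.1
lemma add_lt_add_right : ∀ a b c : M, S.lt a b → S.lt (S.add a c) (S.add b c) :=
  hP.2.2.2.2.2.2.2.2.2.2.2.1
lemma mul_lt_mul_right : ∀ a b c : M, S.lt S.zero c → S.lt a b → S.lt (S.mul a c) (S.mul b c) :=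
  hP.2.2.2.2.2.2.2.2.2.2.2.2.1
lemma exists_diff : ∀ a b : M, S.lt a b → ∃ c : M, S.add a c = b :=
  hP.2.2.2.2.2.2.2.2.2.2.2.2.2.1
lemma zero_lt_one : S.lt S.zero S.one := hP.2.2.2.2.2.2.2.2.2.2.2.2.2.2.1
lemma discrete : ∀ a : M, S.lt S.zero a → a = S.one ∨ S.lt S.one a :=
  hP.2.2.2.2.2.2.2.2.2.2.2.2.2.2.2.1
lemma zero_or_pos : ∀ a : M, a = S.zero ∨ S.lt S.zero a := hP.2.2.2.2.2.2.2.2.2.2.2.2.2.2.2.2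

lemma zero_add (a : M) : S.add S.zero a = a := by rw [add_comm hP, add_zero hP]
lemma one_mul (a : M) : S.mul S.one a = a := by rw [mul_comm hP, mul_one hP]
lemma zero_mul (a : M) : S.mul S.zero a = S.zero := by rw [mul_comm hP, mul_zero hP]
lemma rdistrib (a b c : M) : S.mul (S.add a b) c = S.add (S.mul a c) (S.mul b c) := by
  rw [mul_comm hP, ldistrib hP, mul_comm hP c a, mul_comm hP c b]
lemma two_mul (a : M) : S.mul S.two a = S.add a a := by
  rw [AStr.two, rdistrib hP, one_mul hP]
lemma lt_asymm {a b : M} (h : S.lt a b) : ¬ S.lt b a :=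
  fun h' => lt_irrefl hP a (lt_trans hP _ _ _ h h')
lemma add_lt_add_left (a b c : M) (h : S.lt a b) : S.lt (S.add c a) (S.add c b) := by
  rw [add_comm hP c a, add_comm hP c b]; exact add_lt_add_right hP _ _ _ h
lemma add_left_cancel {a b c : M} (h : S.add c a = S.add c b) : a = b := by
  rcases tricho hP a b with h' | h' | h'
  · exact absurd (h ▸ add_lt_add_left hP _ _ c h') (lt_irrefl hP _)
  · exact h'
  · exact absurd (h ▸ add_lt_add_left hP _ _ c h') (lt_irrefl hP _)
lemma add_right_cancel {a b c : M} (h : S.add a c = S.add b c) : a = b :=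
  add_left_cancel hP (by rw [add_comm hP c a, add_comm hP c b] at *; exact h)
lemma lt_of_add_lt_add_left {a b c : M} (h : S.lt (S.add c a) (S.add c b)) : S.lt a b := by
  rcases tricho hP a b with h' | h' | h'
  · exact h'
  · exact absurd (h' ▸ h) (lt_irrefl hP _)
  · exact absurd h (lt_asymm hP (add_lt_add_left hP _ _ c h'))
lemma not_lt_zero (a : M) : ¬ S.lt a S.zero := by
  rcases zero_or_pos hP a with h | h
  · exact h ▸ lt_irrefl hP _
  · exact fun h' => lt_irrefl hP _ (lt_trans hP _ _ _ h h')
lemma zero_lt_two : S.lt S.zero S.two := by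
  have h1 : S.lt S.one S.two := by
    have := add_lt_add_right hP _ _ S.one (zero_lt_one hP)
    rwa [zero_add hP] at this
  exact lt_trans hP _ _ _ (zero_lt_one hP) h1
lemma lt_succ_self (a : M) : S.lt a (S.add a S.one) := by
  have := add_lt_add_right hP _ _ a (zero_lt_one hP)
  rwa [zero_add hP, add_comm hP] at this
lemma zero_lt_succ (a : M) : S.lt S.zero (S.add a S.one) := by
  rcases zero_or_pos hP a with h | h
  · rw [h, zero_add hP]; exact zero_lt_one hP
  · exact lt_trans hP _ _ _ h (lt_succ_self hP a)
lemma succ_le_of_lt {a b : M} (h : S.lt a b) : S.add a S.one = b ∨ S.lt (S.add a S.one) b := by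
  obtain ⟨c, hc⟩ := exists_diff hP _ _ h
  rcases zero_or_pos hP c with h0 | h0
  · rw [h0, add_zero hP] at hc; exact absurd (hc ▸ h) (lt_irrefl hP _)
  · rcases discrete hP c h0 with h1 | h1
    · left; rw [← h1]; exact hc
    · right
      have := add_lt_add_left hP _ _ a h1
      rw [hc] at this; exact this
lemma le_of_lt_succ {a b : M} (h : S.lt b (S.add a S.one)) : S.lt b a ∨ b = a := by
  rcases tricho hP b a with h' | h' | h'
  · exact Or.inl h'
  · exact Or.inr h'
  · rcases succ_le_of_lt hP h' with h1 | h1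
    · exact absurd (h1 ▸ h) (lt_irrefl hP _)
    · exact absurd (lt_trans hP _ _ _ h h1) (lt_irrefl hP _)
lemma mul_lt_mul_left {a b c : M} (hc : S.lt S.zero c) (h : S.lt a b) :
    S.lt (S.mul c a) (S.mul c b) := by
  rw [mul_comm hP c a, mul_comm hP c b]; exact mul_lt_mul_right hP _ _ _ hc h
lemma le_refl (a : M) : S.le a a := Or.inr rfl
lemma le_of_lt {a b : M} (h : S.lt a b) : S.le a b := Or.inl h
lemma lt_of_lt_of_le {a b c : M} (h : S.lt a b) (h' : S.le b c) : S.lt a c := by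
  rcases h' with h' | rfl
  · exact lt_trans hP _ _ _ h h'
  · exact h
lemma lt_of_le_of_lt {a b c : M} (h : S.le a b) (h' : S.lt b c) : S.lt a c := by
  rcases h with h | rfl
  · exact lt_trans hP _ _ _ h h'
  · exact h'
lemma le_trans {a b c : M} (h : S.le a b) (h' : S.le b c) : S.le a c := by
  rcases h with h | rfl
  · exact Or.inl (lt_of_lt_of_le hP h h')
  · exact h'
lemma le_add_right (a b : M) : S.le a (S.add a b) := by
  rcases zero_or_pos hP b with h | h
  · rw [h, add_zero hP]; exact Or.inr rfl
  · left; have := add_lt_add_left hP _ _ a h; rwa [add_zero hP] at this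
lemma le_mul_right {a b : M} (c : M) (h : S.le a b) : S.le (S.mul a c) (S.mul b c) := by
  rcases zero_or_pos hP c with h0 | h0
  · rw [h0, mul_zero hP, mul_zero hP]; exact Or.inr rfl
  · rcases h with h | rfl
    · exact Or.inl (mul_lt_mul_right hP _ _ _ h0 h)
    · exact Or.inr rfl
lemma le_mul_left {a b : M} (c : M) (h : S.le a b) : S.le (S.mul c a) (S.mul c b) := by
  rw [mul_comm hP c a, mul_comm hP c b]; exact le_mul_right hP c h
lemma add_le_add_right {a b : M} (c : M) (h : S.le a b) : S.le (S.add a c) (S.add b c) := by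
  rcases h with h | rfl
  · exact Or.inl (add_lt_add_right hP _ _ _ h)
  · exact Or.inr rfl
lemma add_le_add_left {a b : M} (c : M) (h : S.le a b) : S.le (S.add c a) (S.add c b) := by
  rw [add_comm hP c a, add_comm hP c b]; exact add_le_add_right hP c h

/-- the key identity `n(n+1) + 2(n+1) = (n+1)((n+1)+1)` -/
lemma pair_step (n : M) :
    S.add (S.mul n (S.add n S.one)) (S.mul S.two (S.add n S.one)) =
    S.mul (S.add n S.one) (S.add (S.add n S.one) S.one) := by
  have h1 : S.mul (S.add n S.one) (S.add (S.add n S.one) S.one)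
      = S.add (S.mul (S.add n S.one) (S.add n S.one)) (S.add n S.one) := by
    rw [ldistrib hP, mul_one hP]
  have h2 : S.mul (S.add n S.one) (S.add n S.one)
      = S.add (S.mul n (S.add n S.one)) (S.add n S.one) := by
    rw [rdistrib hP, one_mul hP]
  rw [h1, h2, two_mul hP, add_assoc hP]

lemma pair_mono {a b a' b' : M} (h : S.lt (S.add a b) (S.add a' b')) :
    S.lt (S.add (S.mul (S.add a b) (S.add (S.add a b) S.one)) (S.mul S.two a))
         (S.add (S.mul (S.add a' b') (S.add (S.add a' b') S.one)) (S.mul S.two a')) := by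
  have ha : S.le a (S.add a b) := le_add_right hP a b
  have ha1 : S.lt a (S.add (S.add a b) S.one) :=
    lt_of_le_of_lt hP ha (lt_succ_self hP (S.add a b))
  have h2a : S.lt (S.mul S.two a) (S.mul S.two (S.add (S.add a b) S.one)) :=
    mul_lt_mul_left hP (zero_lt_two hP) ha1
  have step1 := add_lt_add_left hP _ _ (S.mul (S.add a b) (S.add (S.add a b) S.one)) h2a
  rw [pair_step hP] at step1
  have hn1 : S.le (S.add (S.add a b) S.one) (S.add a' b') := by
    rcases succ_le_of_lt hP h with h1 | h1
    · exact Or.inr h1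
    · exact Or.inl h1
  have h1a := le_mul_right hP (S.add (S.add (S.add a b) S.one) S.one) hn1
  have hn2 := add_le_add_right hP S.one hn1
  have h1b := le_mul_left hP (S.add a' b') hn2
  have h1d : S.le (S.mul (S.add a' b') (S.add (S.add a' b') S.one))
      (S.add (S.mul (S.add a' b') (S.add (S.add a' b') S.one)) (S.mul S.two a')) :=
    le_add_right hP _ _
  exact lt_of_lt_of_le hP step1 (le_trans hP h1a (le_trans hP h1b h1d))

lemma pair_inj {p a b a' b' : M} (hp : S.PairRel p a b) (hp' : S.PairRel p a' b') :
    a = a' ∧ b = b' := by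
  unfold AStr.PairRel at hp hp'
  have heq := hp.symm.trans hp'
  have hnn : S.add a b = S.add a' b' := by
    rcases tricho hP (S.add a b) (S.add a' b') with h | h | h
    · exact absurd (heq ▸ pair_mono hP h) (lt_irrefl hP _)
    · exact h
    · exact absurd (heq ▸ pair_mono hP h) (lt_irrefl hP _)
  rw [hnn] at heq
  have h2a := add_left_cancel hP heq
  have haa : a = a' := by
    rw [two_mul hP, two_mul hP] at h2a
    rcases tricho hP a a' with h | h | h
    · exact absurd (h2a ▸ lt_trans hP _ _ _ (add_lt_add_right hP _ _ a h)
        (add_lt_add_left hP _ _ a' h)) (lt_irrefl hP _)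
    · exact h
    · exact absurd (h2a ▸ lt_trans hP _ _ _ (add_lt_add_right hP _ _ a' h)
        (add_lt_add_left hP _ _ a h)) (lt_irrefl hP _)
  subst haa
  rw [add_comm hP a b, add_comm hP a b'] at hnn
  exact ⟨rfl, add_right_cancel hP hnn⟩

lemma pair_of_even {a b c : M}
    (hc : S.mul S.two c = S.mul (S.add a b) (S.add (S.add a b) S.one)) :
    S.PairRel (S.add c a) a b := by
  unfold AStr.PairRel
  rw [ldistrib hP, hc]

end PK
end Akit


section Compre
variable {M : Type} {S : AStr M} {𝔛 : Set (Set M)} {X0 : Set M}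
open PK

lemma compre (hACA : SatACA0 S 𝔛) {φ : Fml} (hφ : φ.IsArith) (v : ℕ → M) (w : ℕ → Set M)
    (hw : ∀ k, w k ∈ 𝔛) : {z : M | Sat S 𝔛 (Function.update v 0 z) w φ} ∈ 𝔛 :=
  hACA.2.2 φ 0 hφ v w hw

lemma univ_mem (hACA : SatACA0 S 𝔛) (h0 : X0 ∈ 𝔛) : (Set.univ : Set M) ∈ 𝔛 := by
  have h := compre hACA (φ := .eq .zero .zero) (by simp [Fml.IsArith])
    (fun _ => S.zero) (fun _ => X0) (fun _ => h0)
  have e : {z : M | Sat S 𝔛 (Function.update (fun _ => S.zero) 0 z) (fun _ => X0)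
      (.eq .zero .zero)} = Set.univ := by
    ext z; simp [PTerm.val]
  rwa [e] at h

lemma inter_mem (hACA : SatACA0 S 𝔛) {A B : Set M} (hA : A ∈ 𝔛) (hB : B ∈ 𝔛) :
    A ∩ B ∈ 𝔛 := by
  have h := compre hACA (φ := (Fml.mem (.var 0) 0).and (.mem (.var 0) 1))
    (by simp [Fml.IsArith, Fml.and])
    (fun _ => S.zero) (fun k => if k = 0 then A else B)
    (fun k => by split <;> assumption)
  have e : {z : M | Sat S 𝔛 (Function.update (fun _ => S.zero) 0 z)
      (fun k => if k = 0 then A else B) ((Fml.mem (.var 0) 0).and (.mem (.var 0) 1))}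
      = A ∩ B := by
    ext z; simp [PTerm.val]
  rwa [e] at h

lemma slice_mem (hACA : SatACA0 S 𝔛) {A : Set M} (hA : A ∈ 𝔛) (a : M) :
    S.SliceAt A a ∈ 𝔛 := by
  have h := compre hACA (φ := slMemF 0 (.var 1) (.var 0) 2)
    (by simp [Fml.IsArith, Fml.and, Fml.ex, slMemF, pairF])
    (fun _ => a) (fun _ => A) (fun _ => hA)
  have e : {z : M | Sat S 𝔛 (Function.update (fun _ => a) 0 z) (fun _ => A)
      (slMemF 0 (.var 1) (.var 0) 2)} = S.SliceAt A a := by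
    ext z
    rw [Set.mem_setOf_eq, sat_slMemF (by simp [PTerm.vars]) (by simp [PTerm.vars])]
    simp [PTerm.val]
  rwa [e] at h

lemma set_ind (hACA : SatACA0 S 𝔛) {X : Set M} (hX : X ∈ 𝔛) (h0 : S.zero ∈ X)
    (hs : ∀ a, a ∈ X → S.add a S.one ∈ X) : ∀ a, a ∈ X := hACA.2.1 X hX h0 hs

lemma even_all (hP : PAminusSem S) (hACA : SatACA0 S 𝔛) (h0 : X0 ∈ 𝔛) (n : M) :
    ∃ c, S.mul S.two c = S.mul n (S.add n S.one) := by
  classical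
  set φ : Fml := .ex 1 (.eq (.mul (.add .one .one) (.var 1)) (.mul (.var 0) (.add (.var 0) .one)))
    with hφdef
  have hE := compre hACA (φ := φ) (by simp [hφdef, Fml.IsArith, Fml.ex]) (fun _ => S.zero)
    (fun _ => X0) (fun _ => h0)
  have hchar : ∀ z : M, z ∈ {z : M | Sat S 𝔛 (Function.update (fun _ => S.zero) 0 z)
      (fun _ => X0) φ} ↔ ∃ c, S.mul S.two c = S.mul z (S.add z S.one) := by
    intro z
    simp [hφdef, PTerm.val, AStr.two, Function.update_of_ne (by decide : (0:ℕ) ≠ 1)]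
  refine (hchar n).1 (set_ind hACA hE ?_ ?_ n)
  · refine (hchar S.zero).2 ⟨S.zero, ?_⟩
    rw [mul_zero hP, zero_mul hP]
  · intro a ha
    obtain ⟨c, hc⟩ := (hchar a).1 ha
    refine (hchar (S.add a S.one)).2 ⟨S.add c (S.add a S.one), ?_⟩
    rw [ldistrib hP, hc, pair_step hP]

lemma pair_exists (hP : PAminusSem S) (hACA : SatACA0 S 𝔛) (h0 : X0 ∈ 𝔛) (a b : M) :
    ∃ p, S.PairRel p a b := by
  obtain ⟨c, hc⟩ := even_all hP hACA h0 (S.add a b)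
  exact ⟨S.add c a, pair_of_even hP hc⟩

lemma lnp (hP : PAminusSem S) (hACA : SatACA0 S 𝔛) {X : Set M} (hX : X ∈ 𝔛) {a : M}
    (ha : a ∈ X) : ∃ m, m ∈ X ∧ ∀ y, S.lt y m → y ∉ X := by
  classical
  by_contra hcon
  push_neg at hcon
  set φ : Fml := .all 1 (.imp ((Fml.lt (.var 1) (.var 0)).or (.eq (.var 1) (.var 0)))
    (.not (.mem (.var 1) 0))) with hφdef
  have hY := compre hACA (φ := φ) (by simp [hφdef, Fml.IsArith, Fml.or]) (fun _ => S.zero)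
    (fun _ => X) (fun _ => hX)
  have hchar : ∀ z : M, z ∈ {z : M | Sat S 𝔛 (Function.update (fun _ => S.zero) 0 z)
      (fun _ => X) φ} ↔ ∀ y, S.le y z → y ∉ X := by
    intro z
    simp only [hφdef, Set.mem_setOf_eq, sat_all, sat_imp, sat_or, sat_not, sat_mem, sat_lt,
      sat_eq, PTerm.val, Function.update_apply]
    norm_num
    constructor
    · intro h y hy; exact h y hy
    · intro h y hy; exact h y hy
  have hind : ∀ z, z ∈ {z : M | Sat S 𝔛 (Function.update (fun _ => S.zero) 0 z)
      (fun _ => X) φ} := by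
    refine set_ind hACA hY ?_ ?_
    · refine (hchar S.zero).2 ?_
      intro y hy hyX
      rcases hy with hy | heq
      · exact not_lt_zero hP y hy
      · subst heq
        obtain ⟨y', hy', hy'X⟩ := hcon _ hyX
        exact not_lt_zero hP y' hy'
    · intro z hz
      have hz' := (hchar z).1 hz
      refine (hchar (S.add z S.one)).2 ?_
      intro y hy hyX
      rcases hy with hy | heq
      · rcases le_of_lt_succ hP hy with h' | h'
        · exact hz' y (Or.inl h') hyX
        · exact hz' y (Or.inr h') hyX
      · subst heq
        obtain ⟨y', hy', hy'X⟩ := hcon _ hyX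
        rcases le_of_lt_succ hP hy' with h' | h'
        · exact hz' y' (Or.inl h') hy'X
        · exact hz' y' (Or.inr h') hy'X
  exact (hchar a).1 (hind a) a (Or.inr rfl) ha

end Compre


section Diag
variable {M : Type} {S : AStr M} {X : Set (Set M)} {v : ℕ → M} {w : ℕ → Set M}

def diag2F (n : ℕ) (x y : PTerm) (kC : ℕ) : Fml :=
  .ex 20 (.ex 21 ((seqLenF (.var 20) (numeral 2) 22).and
    ((seqAtF (.var 20) (numeral 0) x 25).and
    ((seqAtF (.var 20) (numeral 1) y 30).and
    ((pairF (.var 21) (numeral n) (.var 20)).and (.mem (.var 21) kC))))))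

lemma sat_diag2F {n kC : ℕ} {x y : PTerm} (hx : ∀ k ∈ x.vars, k < 20)
    (hy : ∀ k ∈ y.vars, k < 20) :
    Sat S X v w (diag2F n x y kC) ↔ ∃ s p, S.SeqLen s (S.num 2) ∧
      S.SeqAt s (S.num 0) (x.val S v) ∧ S.SeqAt s (S.num 1) (y.val S v) ∧
      S.PairRel p (S.num n) s ∧ p ∈ w kC := by
  have hsl : ∀ v' : ℕ → M, Sat S X v' w (seqLenF (.var 20) (numeral 2) 22) ↔
      S.SeqLen (v' 20) (S.num 2) := fun v' => by
    rw [sat_seqLenF (by simp [PTerm.vars]) (by simp)]; simp [PTerm.val, AStr.num]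
  have hs0 : ∀ v' : ℕ → M, Sat S X v' w (seqAtF (.var 20) (numeral 0) x 25) ↔
      S.SeqAt (v' 20) (S.num 0) (x.val S v') := fun v' => by
    rw [sat_seqAtF (by simp [PTerm.vars]) (by simp)
      (fun k h => by have := hx _ h; omega)]; simp [PTerm.val, AStr.num]
  have hs1 : ∀ v' : ℕ → M, Sat S X v' w (seqAtF (.var 20) (numeral 1) y 30) ↔
      S.SeqAt (v' 20) (S.num 1) (y.val S v') := fun v' => by
    rw [sat_seqAtF (by simp [PTerm.vars]) (by simp)
      (fun k h => by have := hy _ h; omega)]; simp [PTerm.val, AStr.num]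
  have hvx : ∀ s p : M, x.val S (Function.update (Function.update v 20 s) 21 p) = x.val S v := by
    intro s p
    rw [PTerm.val_update (k := 21) (fun h => absurd (hx _ h) (by omega)),
        PTerm.val_update (k := 20) (fun h => absurd (hx _ h) (by omega))]
  have hvy : ∀ s p : M, y.val S (Function.update (Function.update v 20 s) 21 p) = y.val S v := by
    intro s p
    rw [PTerm.val_update (k := 21) (fun h => absurd (hy _ h) (by omega)),
        PTerm.val_update (k := 20) (fun h => absurd (hy _ h) (by omega))]
  simp only [diag2F, sat_ex, sat_and, sat_mem, sat_pairF, hsl, hs0, hs1, hvx, hvy,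
    PTerm.val, val_numeral, Function.update_apply]
  norm_num

def diag3F (n : ℕ) (x y z : PTerm) (kC : ℕ) : Fml :=
  .ex 20 (.ex 21 ((seqLenF (.var 20) (numeral 3) 22).and
    ((seqAtF (.var 20) (numeral 0) x 25).and
    ((seqAtF (.var 20) (numeral 1) y 30).and
    ((seqAtF (.var 20) (numeral 2) z 35).and
    ((pairF (.var 21) (numeral n) (.var 20)).and (.mem (.var 21) kC)))))))

lemma sat_diag3F {n kC : ℕ} {x y z : PTerm} (hx : ∀ k ∈ x.vars, k < 20)
    (hy : ∀ k ∈ y.vars, k < 20) (hz : ∀ k ∈ z.vars, k < 20) :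
    Sat S X v w (diag3F n x y z kC) ↔ ∃ s p, S.SeqLen s (S.num 3) ∧
      S.SeqAt s (S.num 0) (x.val S v) ∧ S.SeqAt s (S.num 1) (y.val S v) ∧
      S.SeqAt s (S.num 2) (z.val S v) ∧ S.PairRel p (S.num n) s ∧ p ∈ w kC := by
  have hsl : ∀ v' : ℕ → M, Sat S X v' w (seqLenF (.var 20) (numeral 3) 22) ↔
      S.SeqLen (v' 20) (S.num 3) := fun v' => by
    rw [sat_seqLenF (by simp [PTerm.vars]) (by simp)]; simp [PTerm.val, AStr.num]
  have hs0 : ∀ v' : ℕ → M, Sat S X v' w (seqAtF (.var 20) (numeral 0) x 25) ↔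
      S.SeqAt (v' 20) (S.num 0) (x.val S v') := fun v' => by
    rw [sat_seqAtF (by simp [PTerm.vars]) (by simp)
      (fun k h => by have := hx _ h; omega)]; simp [PTerm.val, AStr.num]
  have hs1 : ∀ v' : ℕ → M, Sat S X v' w (seqAtF (.var 20) (numeral 1) y 30) ↔
      S.SeqAt (v' 20) (S.num 1) (y.val S v') := fun v' => by
    rw [sat_seqAtF (by simp [PTerm.vars]) (by simp)
      (fun k h => by have := hy _ h; omega)]; simp [PTerm.val, AStr.num]
  have hs2 : ∀ v' : ℕ → M, Sat S X v' w (seqAtF (.var 20) (numeral 2) z 35) ↔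
      S.SeqAt (v' 20) (S.num 2) (z.val S v') := fun v' => by
    rw [sat_seqAtF (by simp [PTerm.vars]) (by simp)
      (fun k h => by have := hz _ h; omega)]; simp [PTerm.val, AStr.num]
  have hvx : ∀ s p : M, x.val S (Function.update (Function.update v 20 s) 21 p) = x.val S v := by
    intro s p
    rw [PTerm.val_update (k := 21) (fun h => absurd (hx _ h) (by omega)),
        PTerm.val_update (k := 20) (fun h => absurd (hx _ h) (by omega))]
  have hvy : ∀ s p : M, y.val S (Function.update (Function.update v 20 s) 21 p) = y.val S v := by
    intro s p
    rw [PTerm.val_update (k := 21) (fun h => absurd (hy _ h) (by omega)),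
        PTerm.val_update (k := 20) (fun h => absurd (hy _ h) (by omega))]
  have hvz : ∀ s p : M, z.val S (Function.update (Function.update v 20 s) 21 p) = z.val S v := by
    intro s p
    rw [PTerm.val_update (k := 21) (fun h => absurd (hz _ h) (by omega)),
        PTerm.val_update (k := 20) (fun h => absurd (hz _ h) (by omega))]
  simp only [diag3F, sat_ex, sat_and, sat_mem, sat_pairF, hsl, hs0, hs1, hs2, hvx, hvy, hvz,
    PTerm.val, val_numeral, Function.update_apply]
  norm_num

def diag4F (n : ℕ) (x y z u : PTerm) (kC : ℕ) : Fml :=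
  .ex 20 (.ex 21 ((seqLenF (.var 20) (numeral 4) 22).and
    ((seqAtF (.var 20) (numeral 0) x 25).and
    ((seqAtF (.var 20) (numeral 1) y 30).and
    ((seqAtF (.var 20) (numeral 2) z 35).and
    ((seqAtF (.var 20) (numeral 3) u 40).and
    ((pairF (.var 21) (numeral n) (.var 20)).and (.mem (.var 21) kC))))))))

lemma sat_diag4F {n kC : ℕ} {x y z u : PTerm} (hx : ∀ k ∈ x.vars, k < 20)
    (hy : ∀ k ∈ y.vars, k < 20) (hz : ∀ k ∈ z.vars, k < 20) (hu : ∀ k ∈ u.vars, k < 20) :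
    Sat S X v w (diag4F n x y z u kC) ↔ ∃ s p, S.SeqLen s (S.num 4) ∧
      S.SeqAt s (S.num 0) (x.val S v) ∧ S.SeqAt s (S.num 1) (y.val S v) ∧
      S.SeqAt s (S.num 2) (z.val S v) ∧ S.SeqAt s (S.num 3) (u.val S v) ∧
      S.PairRel p (S.num n) s ∧ p ∈ w kC := by
  have hsl : ∀ v' : ℕ → M, Sat S X v' w (seqLenF (.var 20) (numeral 4) 22) ↔
      S.SeqLen (v' 20) (S.num 4) := fun v' => by
    rw [sat_seqLenF (by simp [PTerm.vars]) (by simp)]; simp [PTerm.val, AStr.num]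
  have hs0 : ∀ v' : ℕ → M, Sat S X v' w (seqAtF (.var 20) (numeral 0) x 25) ↔
      S.SeqAt (v' 20) (S.num 0) (x.val S v') := fun v' => by
    rw [sat_seqAtF (by simp [PTerm.vars]) (by simp)
      (fun k h => by have := hx _ h; omega)]; simp [PTerm.val, AStr.num]
  have hs1 : ∀ v' : ℕ → M, Sat S X v' w (seqAtF (.var 20) (numeral 1) y 30) ↔
      S.SeqAt (v' 20) (S.num 1) (y.val S v') := fun v' => by
    rw [sat_seqAtF (by simp [PTerm.vars]) (by simp)
      (fun k h => by have := hy _ h; omega)]; simp [PTerm.val, AStr.num]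
  have hs2 : ∀ v' : ℕ → M, Sat S X v' w (seqAtF (.var 20) (numeral 2) z 35) ↔
      S.SeqAt (v' 20) (S.num 2) (z.val S v') := fun v' => by
    rw [sat_seqAtF (by simp [PTerm.vars]) (by simp)
      (fun k h => by have := hz _ h; omega)]; simp [PTerm.val, AStr.num]
  have hs3 : ∀ v' : ℕ → M, Sat S X v' w (seqAtF (.var 20) (numeral 3) u 40) ↔
      S.SeqAt (v' 20) (S.num 3) (u.val S v') := fun v' => by
    rw [sat_seqAtF (by simp [PTerm.vars]) (by simp)
      (fun k h => by have := hu _ h; omega)]; simp [PTerm.val, AStr.num]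
  have hvx : ∀ s p : M, x.val S (Function.update (Function.update v 20 s) 21 p) = x.val S v := by
    intro s p
    rw [PTerm.val_update (k := 21) (fun h => absurd (hx _ h) (by omega)),
        PTerm.val_update (k := 20) (fun h => absurd (hx _ h) (by omega))]
  have hvy : ∀ s p : M, y.val S (Function.update (Function.update v 20 s) 21 p) = y.val S v := by
    intro s p
    rw [PTerm.val_update (k := 21) (fun h => absurd (hy _ h) (by omega)),
        PTerm.val_update (k := 20) (fun h => absurd (hy _ h) (by omega))]
  have hvz : ∀ s p : M, z.val S (Function.update (Function.update v 20 s) 21 p) = z.val S v := by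
    intro s p
    rw [PTerm.val_update (k := 21) (fun h => absurd (hz _ h) (by omega)),
        PTerm.val_update (k := 20) (fun h => absurd (hz _ h) (by omega))]
  have hvu : ∀ s p : M, u.val S (Function.update (Function.update v 20 s) 21 p) = u.val S v := by
    intro s p
    rw [PTerm.val_update (k := 21) (fun h => absurd (hu _ h) (by omega)),
        PTerm.val_update (k := 20) (fun h => absurd (hu _ h) (by omega))]
  simp only [diag4F, sat_ex, sat_and, sat_mem, sat_pairF, hsl, hs0, hs1, hs2, hs3, hvx, hvy,
    hvz, hvu, PTerm.val, val_numeral, Function.update_apply]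
  norm_num

end Diag


section Psi
variable {M : Type} {S : AStr M} {X : Set (Set M)} {v : ℕ → M} {w : ℕ → Set M}

def psiMem : Fml := memF (.var 0) (.var 1) 2
def psiAdd : Fml := .eq (.add (.var 0) (.var 1)) (.var 2)
def psiMul : Fml := .eq (.mul (.var 0) (.var 1)) (.var 2)
def psiLt : Fml := .lt (.var 0) (.var 1)
def psiMod2 : Fml :=
  (pairF (.var 1) (.var 2) (.var 3)).and
  ((Fml.lt .one (.add .one (.mul (.add (.var 0) .one) (.var 3)))).and
   (.ex 4 (.eq (.var 2)
     (.add (.mul (.var 4) (.add .one (.mul (.add (.var 0) .one) (.var 3)))) .one))))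
def psiAlpha : Fml := .ex 3 psiMod2
def psiQ : Fml := .eq (.var 1)
  (.add (.mul (.var 3) (.add .one (.mul (.add (.var 0) .one) (.var 2)))) .one)

lemma sat_psiMem : Sat S X v w psiMem ↔ S.MemRel (v 0) (v 1) := by
  rw [psiMem, sat_memF (by simp [PTerm.vars]) (by simp [PTerm.vars])]; rfl

lemma sat_psiAdd : Sat S X v w psiAdd ↔ S.add (v 0) (v 1) = v 2 := by
  simp [psiAdd, PTerm.val]

lemma sat_psiMul : Sat S X v w psiMul ↔ S.mul (v 0) (v 1) = v 2 := by
  simp [psiMul, PTerm.val]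

lemma sat_psiLt : Sat S X v w psiLt ↔ S.lt (v 0) (v 1) := by
  simp [psiLt, PTerm.val]

lemma sat_psiMod2 : Sat S X v w psiMod2 ↔
    S.PairRel (v 1) (v 2) (v 3) ∧
    S.lt S.one (S.add S.one (S.mul (S.add (v 0) S.one) (v 3))) ∧
    ∃ q, v 2 = S.add (S.mul q (S.add S.one (S.mul (S.add (v 0) S.one) (v 3)))) S.one := by
  simp only [psiMod2, sat_and, sat_lt, sat_ex, sat_eq, sat_pairF, PTerm.val,
    Function.update_apply]
  norm_num

lemma sat_psiAlpha : Sat S X v w psiAlpha ↔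
    ∃ β, S.PairRel (v 1) (v 2) β ∧
      S.lt S.one (S.add S.one (S.mul (S.add (v 0) S.one) β)) ∧
      ∃ q, v 2 = S.add (S.mul q (S.add S.one (S.mul (S.add (v 0) S.one) β))) S.one := by
  simp only [psiAlpha, sat_ex, sat_psiMod2, Function.update_apply]
  norm_num

lemma sat_psiQ : Sat S X v w psiQ ↔
    v 1 = S.add (S.mul (v 3) (S.add S.one (S.mul (S.add (v 0) S.one) (v 2)))) S.one := by
  simp [psiQ, PTerm.val]

lemma psiMem_FO : psiMem.IsFO := by
  simp [psiMem, memF, pairF, modF, Fml.and, Fml.ex, Fml.IsFO]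
lemma psiAdd_FO : psiAdd.IsFO := by simp [psiAdd, Fml.IsFO]
lemma psiMul_FO : psiMul.IsFO := by simp [psiMul, Fml.IsFO]
lemma psiLt_FO : psiLt.IsFO := by simp [psiLt, Fml.IsFO]
lemma psiMod2_FO : psiMod2.IsFO := by
  simp [psiMod2, pairF, Fml.and, Fml.ex, Fml.IsFO]
lemma psiAlpha_FO : psiAlpha.IsFO := by
  simp [psiAlpha, Fml.ex, Fml.IsFO, psiMod2, pairF, Fml.and]
lemma psiQ_FO : psiQ.IsFO := by simp [psiQ, Fml.IsFO]

lemma psiMem_free : psiMem.freeN ⊆ Finset.range 2 := by decide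
lemma psiAdd_free : psiAdd.freeN ⊆ Finset.range 3 := by decide
lemma psiMul_free : psiMul.freeN ⊆ Finset.range 3 := by decide
lemma psiLt_free : psiLt.freeN ⊆ Finset.range 2 := by decide
lemma psiMod2_free : psiMod2.freeN ⊆ Finset.range 4 := by decide
lemma psiAlpha_free : psiAlpha.freeN ⊆ Finset.range 3 := by decide
lemma psiQ_free : psiQ.freeN ⊆ Finset.range 4 := by decide

end Psi


section Sets
variable {M : Type} {S : AStr M} {𝔛 : Set (Set M)} {C G1 G2 : Set M}

lemma eql_set (hACA : SatACA0 S 𝔛) (h1 : G1 ∈ 𝔛) (h2 : G2 ∈ 𝔛) :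
    {b : M | ∃ u, u ∈ S.SliceAt G1 b ∧ u ∈ S.SliceAt G2 b} ∈ 𝔛 := by
  set w : ℕ → Set M := fun k => if k = 0 then G1 else G2 with hw
  have h := compre hACA (φ := .ex 1 ((slMemF 0 (.var 0) (.var 1) 10).and
      (slMemF 1 (.var 0) (.var 1) 11)))
    (by simp [Fml.IsArith, Fml.and, Fml.ex, slMemF, pairF]) (fun _ => S.zero) w
    (fun k => by rw [hw]; dsimp only; split_ifs <;> assumption)
  have hsm0 : ∀ v' : ℕ → M, Sat S 𝔛 v' w (slMemF 0 (.var 0) (.var 1) 10) ↔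
      (v' 1) ∈ S.SliceAt (w 0) (v' 0) := fun v' => by
    rw [sat_slMemF (by simp [PTerm.vars]) (by simp [PTerm.vars])]; rfl
  have hsm1 : ∀ v' : ℕ → M, Sat S 𝔛 v' w (slMemF 1 (.var 0) (.var 1) 11) ↔
      (v' 1) ∈ S.SliceAt (w 1) (v' 0) := fun v' => by
    rw [sat_slMemF (by simp [PTerm.vars]) (by simp [PTerm.vars])]; rfl
  have e : {z : M | Sat S 𝔛 (Function.update (fun _ => S.zero) 0 z) w
      (.ex 1 ((slMemF 0 (.var 0) (.var 1) 10).and (slMemF 1 (.var 0) (.var 1) 11)))}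
      = {b : M | ∃ u, u ∈ S.SliceAt G1 b ∧ u ∈ S.SliceAt G2 b} := by
    ext z
    simp only [Set.mem_setOf_eq, sat_ex, sat_and, hsm0, hsm1, Function.update_apply]
    simp only [hw]
    norm_num
  rwa [e] at h

lemma ltK_set (hACA : SatACA0 S 𝔛) (hC : C ∈ 𝔛) (h1 : G1 ∈ 𝔛) (h2 : G2 ∈ 𝔛) (n : ℕ) :
    {b : M | ∃ u u', u ∈ S.SliceAt G1 b ∧ u' ∈ S.SliceAt G2 b ∧
      (∃ s p, S.SeqLen s (S.num 2) ∧ S.SeqAt s (S.num 0) u ∧ S.SeqAt s (S.num 1) u' ∧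
        S.PairRel p (S.num n) s ∧ p ∈ C)} ∈ 𝔛 := by
  set w : ℕ → Set M := fun k => if k = 0 then G1 else if k = 1 then G2 else C with hw
  set φ : Fml := .ex 1 (.ex 2 ((slMemF 0 (.var 0) (.var 1) 10).and
      ((slMemF 1 (.var 0) (.var 2) 11).and (diag2F n (.var 1) (.var 2) 2)))) with hφ
  have h := compre hACA (φ := φ)
    (by simp [hφ, Fml.IsArith, Fml.and, Fml.ex, slMemF, pairF, diag2F, seqLenF, seqAtF,
      betaF, modF]) (fun _ => S.zero) w
    (fun k => by rw [hw]; dsimp only; split_ifs <;> assumption)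
  have hsm0 : ∀ v' : ℕ → M, Sat S 𝔛 v' w (slMemF 0 (.var 0) (.var 1) 10) ↔
      (v' 1) ∈ S.SliceAt (w 0) (v' 0) := fun v' => by
    rw [sat_slMemF (by simp [PTerm.vars]) (by simp [PTerm.vars])]; rfl
  have hsm1 : ∀ v' : ℕ → M, Sat S 𝔛 v' w (slMemF 1 (.var 0) (.var 2) 11) ↔
      (v' 2) ∈ S.SliceAt (w 1) (v' 0) := fun v' => by
    rw [sat_slMemF (by simp [PTerm.vars]) (by simp [PTerm.vars])]; rfl
  have hdg : ∀ v' : ℕ → M, Sat S 𝔛 v' w (diag2F n (.var 1) (.var 2) 2) ↔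
      ∃ s p, S.SeqLen s (S.num 2) ∧ S.SeqAt s (S.num 0) (v' 1) ∧
        S.SeqAt s (S.num 1) (v' 2) ∧ S.PairRel p (S.num n) s ∧ p ∈ w 2 := fun v' => by
    rw [sat_diag2F (by simp [PTerm.vars]) (by simp [PTerm.vars])]; rfl
  have e : {z : M | Sat S 𝔛 (Function.update (fun _ => S.zero) 0 z) w φ} =
      {b : M | ∃ u u', u ∈ S.SliceAt G1 b ∧ u' ∈ S.SliceAt G2 b ∧
      (∃ s p, S.SeqLen s (S.num 2) ∧ S.SeqAt s (S.num 0) u ∧ S.SeqAt s (S.num 1) u' ∧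
        S.PairRel p (S.num n) s ∧ p ∈ C)} := by
    ext z
    simp only [hφ, Set.mem_setOf_eq, sat_ex, sat_and, hsm0, hsm1, hdg,
      Function.update_apply]
    simp only [hw]
    norm_num
  rwa [e] at h

lemma binop_set (hACA : SatACA0 S 𝔛) (hC : C ∈ 𝔛) (h1 : G1 ∈ 𝔛) (h2 : G2 ∈ 𝔛) (n : ℕ) :
    {p : M | ∃ b wv u u', S.PairRel p b wv ∧ u ∈ S.SliceAt G1 b ∧ u' ∈ S.SliceAt G2 b ∧
      (∃ s pp, S.SeqLen s (S.num 3) ∧ S.SeqAt s (S.num 0) u ∧ S.SeqAt s (S.num 1) u' ∧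
        S.SeqAt s (S.num 2) wv ∧ S.PairRel pp (S.num n) s ∧ pp ∈ C)} ∈ 𝔛 := by
  set w : ℕ → Set M := fun k => if k = 0 then G1 else if k = 1 then G2 else C with hw
  set φ : Fml := .ex 1 (.ex 2 (.ex 3 (.ex 4 ((pairF (.var 0) (.var 1) (.var 2)).and
      ((slMemF 0 (.var 1) (.var 3) 10).and ((slMemF 1 (.var 1) (.var 4) 11).and
        (diag3F n (.var 3) (.var 4) (.var 2) 2))))))) with hφ
  have h := compre hACA (φ := φ)
    (by simp [hφ, Fml.IsArith, Fml.and, Fml.ex, slMemF, pairF, diag3F, seqLenF, seqAtF,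
      betaF, modF]) (fun _ => S.zero) w
    (fun k => by rw [hw]; dsimp only; split_ifs <;> assumption)
  have hsm0 : ∀ v' : ℕ → M, Sat S 𝔛 v' w (slMemF 0 (.var 1) (.var 3) 10) ↔
      (v' 3) ∈ S.SliceAt (w 0) (v' 1) := fun v' => by
    rw [sat_slMemF (by simp [PTerm.vars]) (by simp [PTerm.vars])]; rfl
  have hsm1 : ∀ v' : ℕ → M, Sat S 𝔛 v' w (slMemF 1 (.var 1) (.var 4) 11) ↔
      (v' 4) ∈ S.SliceAt (w 1) (v' 1) := fun v' => by
    rw [sat_slMemF (by simp [PTerm.vars]) (by simp [PTerm.vars])]; rfl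
  have hdg : ∀ v' : ℕ → M, Sat S 𝔛 v' w (diag3F n (.var 3) (.var 4) (.var 2) 2) ↔
      ∃ s pp, S.SeqLen s (S.num 3) ∧ S.SeqAt s (S.num 0) (v' 3) ∧
        S.SeqAt s (S.num 1) (v' 4) ∧ S.SeqAt s (S.num 2) (v' 2) ∧
        S.PairRel pp (S.num n) s ∧ pp ∈ w 2 := fun v' => by
    rw [sat_diag3F (by simp [PTerm.vars]) (by simp [PTerm.vars]) (by simp [PTerm.vars])]; rfl
  have e : {z : M | Sat S 𝔛 (Function.update (fun _ => S.zero) 0 z) w φ} =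
      {p : M | ∃ b wv u u', S.PairRel p b wv ∧ u ∈ S.SliceAt G1 b ∧ u' ∈ S.SliceAt G2 b ∧
      (∃ s pp, S.SeqLen s (S.num 3) ∧ S.SeqAt s (S.num 0) u ∧ S.SeqAt s (S.num 1) u' ∧
        S.SeqAt s (S.num 2) wv ∧ S.PairRel pp (S.num n) s ∧ pp ∈ C)} := by
    ext z
    simp only [hφ, Set.mem_setOf_eq, sat_ex, sat_and, sat_pairF, hsm0, hsm1, hdg,
      PTerm.val, Function.update_apply]
    simp only [hw]
    norm_num
  rwa [e] at h

lemma aprime_set (hACA : SatACA0 S 𝔛) (hC : C ∈ 𝔛) (h1 : G1 ∈ 𝔛) (h2 : G2 ∈ 𝔛) (n : ℕ) :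
    {p : M | ∃ a b x y, S.PairRel p a b ∧ x ∈ S.SliceAt G1 a ∧ y ∈ S.SliceAt G2 b ∧
      (∃ s pp, S.SeqLen s (S.num 2) ∧ S.SeqAt s (S.num 0) x ∧ S.SeqAt s (S.num 1) y ∧
        S.PairRel pp (S.num n) s ∧ pp ∈ C)} ∈ 𝔛 := by
  set w : ℕ → Set M := fun k => if k = 0 then G1 else if k = 1 then G2 else C with hw
  set φ : Fml := .ex 1 (.ex 2 (.ex 3 (.ex 4 ((pairF (.var 0) (.var 1) (.var 2)).and
      ((slMemF 0 (.var 1) (.var 3) 10).and ((slMemF 1 (.var 2) (.var 4) 11).and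
        (diag2F n (.var 3) (.var 4) 2))))))) with hφ
  have h := compre hACA (φ := φ)
    (by simp [hφ, Fml.IsArith, Fml.and, Fml.ex, slMemF, pairF, diag2F, seqLenF, seqAtF,
      betaF, modF]) (fun _ => S.zero) w
    (fun k => by rw [hw]; dsimp only; split_ifs <;> assumption)
  have hsm0 : ∀ v' : ℕ → M, Sat S 𝔛 v' w (slMemF 0 (.var 1) (.var 3) 10) ↔
      (v' 3) ∈ S.SliceAt (w 0) (v' 1) := fun v' => by
    rw [sat_slMemF (by simp [PTerm.vars]) (by simp [PTerm.vars])]; rfl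
  have hsm1 : ∀ v' : ℕ → M, Sat S 𝔛 v' w (slMemF 1 (.var 2) (.var 4) 11) ↔
      (v' 4) ∈ S.SliceAt (w 1) (v' 2) := fun v' => by
    rw [sat_slMemF (by simp [PTerm.vars]) (by simp [PTerm.vars])]; rfl
  have hdg : ∀ v' : ℕ → M, Sat S 𝔛 v' w (diag2F n (.var 3) (.var 4) 2) ↔
      ∃ s pp, S.SeqLen s (S.num 2) ∧ S.SeqAt s (S.num 0) (v' 3) ∧
        S.SeqAt s (S.num 1) (v' 4) ∧ S.PairRel pp (S.num n) s ∧ pp ∈ w 2 := fun v' => by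
    rw [sat_diag2F (by simp [PTerm.vars]) (by simp [PTerm.vars])]; rfl
  have e : {z : M | Sat S 𝔛 (Function.update (fun _ => S.zero) 0 z) w φ} =
      {p : M | ∃ a b x y, S.PairRel p a b ∧ x ∈ S.SliceAt G1 a ∧ y ∈ S.SliceAt G2 b ∧
      (∃ s pp, S.SeqLen s (S.num 2) ∧ S.SeqAt s (S.num 0) x ∧ S.SeqAt s (S.num 1) y ∧
        S.PairRel pp (S.num n) s ∧ pp ∈ C)} := by
    ext z
    simp only [hφ, Set.mem_setOf_eq, sat_ex, sat_and, sat_pairF, hsm0, hsm1, hdg,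
      PTerm.val, Function.update_apply]
    simp only [hw]
    norm_num
  rwa [e] at h

lemma walpha_set (hACA : SatACA0 S 𝔛) (hC : C ∈ 𝔛) (h1 : G1 ∈ 𝔛) (n : ℕ) (xs : M) :
    {p : M | ∃ b u y, S.PairRel p b u ∧ y ∈ S.SliceAt G1 b ∧
      (∃ s pp, S.SeqLen s (S.num 3) ∧ S.SeqAt s (S.num 0) xs ∧ S.SeqAt s (S.num 1) y ∧
        S.SeqAt s (S.num 2) u ∧ S.PairRel pp (S.num n) s ∧ pp ∈ C)} ∈ 𝔛 := by
  set w : ℕ → Set M := fun k => if k = 0 then G1 else C with hw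
  set φ : Fml := .ex 1 (.ex 2 (.ex 3 ((pairF (.var 0) (.var 1) (.var 2)).and
      ((slMemF 0 (.var 1) (.var 3) 10).and
        (diag3F n (.var 5) (.var 3) (.var 2) 1))))) with hφ
  have h := compre hACA (φ := φ)
    (by simp [hφ, Fml.IsArith, Fml.and, Fml.ex, slMemF, pairF, diag3F, seqLenF, seqAtF,
      betaF, modF]) (fun _ => xs) w
    (fun k => by rw [hw]; dsimp only; split_ifs <;> assumption)
  have hsm0 : ∀ v' : ℕ → M, Sat S 𝔛 v' w (slMemF 0 (.var 1) (.var 3) 10) ↔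
      (v' 3) ∈ S.SliceAt (w 0) (v' 1) := fun v' => by
    rw [sat_slMemF (by simp [PTerm.vars]) (by simp [PTerm.vars])]; rfl
  have hdg : ∀ v' : ℕ → M, Sat S 𝔛 v' w (diag3F n (.var 5) (.var 3) (.var 2) 1) ↔
      ∃ s pp, S.SeqLen s (S.num 3) ∧ S.SeqAt s (S.num 0) (v' 5) ∧
        S.SeqAt s (S.num 1) (v' 3) ∧ S.SeqAt s (S.num 2) (v' 2) ∧
        S.PairRel pp (S.num n) s ∧ pp ∈ w 1 := fun v' => by
    rw [sat_diag3F (by simp [PTerm.vars]) (by simp [PTerm.vars]) (by simp [PTerm.vars])]; rfl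
  have e : {z : M | Sat S 𝔛 (Function.update (fun _ => xs) 0 z) w φ} =
      {p : M | ∃ b u y, S.PairRel p b u ∧ y ∈ S.SliceAt G1 b ∧
      (∃ s pp, S.SeqLen s (S.num 3) ∧ S.SeqAt s (S.num 0) xs ∧ S.SeqAt s (S.num 1) y ∧
        S.SeqAt s (S.num 2) u ∧ S.PairRel pp (S.num n) s ∧ pp ∈ C)} := by
    ext z
    simp only [hφ, Set.mem_setOf_eq, sat_ex, sat_and, sat_pairF, hsm0, hdg,
      PTerm.val, Function.update_apply]
    simp only [hw]
    norm_num
  rwa [e] at h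

lemma sel4_set (hACA : SatACA0 S 𝔛) (hC : C ∈ 𝔛) (h1 : G1 ∈ 𝔛) (h2 : G2 ∈ 𝔛) (n : ℕ)
    (xs : M) :
    {p : M | ∃ b t y u, S.PairRel p b t ∧ y ∈ S.SliceAt G1 b ∧ u ∈ S.SliceAt G2 b ∧
      (∃ s pp, S.SeqLen s (S.num 4) ∧ S.SeqAt s (S.num 0) xs ∧ S.SeqAt s (S.num 1) y ∧
        S.SeqAt s (S.num 2) u ∧ S.SeqAt s (S.num 3) t ∧
        S.PairRel pp (S.num n) s ∧ pp ∈ C)} ∈ 𝔛 := by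
  set w : ℕ → Set M := fun k => if k = 0 then G1 else if k = 1 then G2 else C with hw
  set φ : Fml := .ex 1 (.ex 2 (.ex 3 (.ex 4 ((pairF (.var 0) (.var 1) (.var 2)).and
      ((slMemF 0 (.var 1) (.var 3) 10).and ((slMemF 1 (.var 1) (.var 4) 11).and
        (diag4F n (.var 5) (.var 3) (.var 4) (.var 2) 2))))))) with hφ
  have h := compre hACA (φ := φ)
    (by simp [hφ, Fml.IsArith, Fml.and, Fml.ex, slMemF, pairF, diag4F, seqLenF, seqAtF,
      betaF, modF]) (fun _ => xs) w
    (fun k => by rw [hw]; dsimp only; split_ifs <;> assumption)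
  have hsm0 : ∀ v' : ℕ → M, Sat S 𝔛 v' w (slMemF 0 (.var 1) (.var 3) 10) ↔
      (v' 3) ∈ S.SliceAt (w 0) (v' 1) := fun v' => by
    rw [sat_slMemF (by simp [PTerm.vars]) (by simp [PTerm.vars])]; rfl
  have hsm1 : ∀ v' : ℕ → M, Sat S 𝔛 v' w (slMemF 1 (.var 1) (.var 4) 11) ↔
      (v' 4) ∈ S.SliceAt (w 1) (v' 1) := fun v' => by
    rw [sat_slMemF (by simp [PTerm.vars]) (by simp [PTerm.vars])]; rfl
  have hdg : ∀ v' : ℕ → M, Sat S 𝔛 v' w (diag4F n (.var 5) (.var 3) (.var 4) (.var 2) 2) ↔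
      ∃ s pp, S.SeqLen s (S.num 4) ∧ S.SeqAt s (S.num 0) (v' 5) ∧
        S.SeqAt s (S.num 1) (v' 3) ∧ S.SeqAt s (S.num 2) (v' 4) ∧
        S.SeqAt s (S.num 3) (v' 2) ∧ S.PairRel pp (S.num n) s ∧ pp ∈ w 2 := fun v' => by
    rw [sat_diag4F (by simp [PTerm.vars]) (by simp [PTerm.vars]) (by simp [PTerm.vars])
      (by simp [PTerm.vars])]; rfl
  have e : {z : M | Sat S 𝔛 (Function.update (fun _ => xs) 0 z) w φ} =
      {p : M | ∃ b t y u, S.PairRel p b t ∧ y ∈ S.SliceAt G1 b ∧ u ∈ S.SliceAt G2 b ∧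
      (∃ s pp, S.SeqLen s (S.num 4) ∧ S.SeqAt s (S.num 0) xs ∧ S.SeqAt s (S.num 1) y ∧
        S.SeqAt s (S.num 2) u ∧ S.SeqAt s (S.num 3) t ∧
        S.PairRel pp (S.num n) s ∧ pp ∈ C)} := by
    ext z
    simp only [hφ, Set.mem_setOf_eq, sat_ex, sat_and, sat_pairF, hsm0, hsm1, hdg,
      PTerm.val, Function.update_apply]
    simp only [hw]
    norm_num
  rwa [e] at h

lemma least_graph_set (hACA : SatACA0 S 𝔛) {D : Set M} (hD : D ∈ 𝔛) :
    {p : M | ∃ b u, S.PairRel p b u ∧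
      ((u ∈ S.SliceAt D b ∧ ∀ u', S.lt u' u → u' ∉ S.SliceAt D b) ∨
       (u = S.zero ∧ ∀ u', u' ∉ S.SliceAt D b))} ∈ 𝔛 := by
  set w : ℕ → Set M := fun _ => D with hw
  set φ : Fml := .ex 1 (.ex 2 ((pairF (.var 0) (.var 1) (.var 2)).and
      (((slMemF 0 (.var 1) (.var 2) 10).and
          (.all 3 (.imp (.lt (.var 3) (.var 2)) (.not (slMemF 0 (.var 1) (.var 3) 11))))).or
       ((Fml.eq (.var 2) .zero).and
          (.all 3 (.not (slMemF 0 (.var 1) (.var 3) 11))))))) with hφ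
  have h := compre hACA (φ := φ)
    (by simp [hφ, Fml.IsArith, Fml.and, Fml.or, Fml.ex, slMemF, pairF])
    (fun _ => S.zero) w (fun k => hD)
  have hsm0 : ∀ v' : ℕ → M, Sat S 𝔛 v' w (slMemF 0 (.var 1) (.var 2) 10) ↔
      (v' 2) ∈ S.SliceAt D (v' 1) := fun v' => by
    rw [sat_slMemF (by simp [PTerm.vars]) (by simp [PTerm.vars])]; rfl
  have hsm1 : ∀ v' : ℕ → M, Sat S 𝔛 v' w (slMemF 0 (.var 1) (.var 3) 11) ↔
      (v' 3) ∈ S.SliceAt D (v' 1) := fun v' => by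
    rw [sat_slMemF (by simp [PTerm.vars]) (by simp [PTerm.vars])]; rfl
  have e : {z : M | Sat S 𝔛 (Function.update (fun _ => S.zero) 0 z) w φ} =
      {p : M | ∃ b u, S.PairRel p b u ∧
      ((u ∈ S.SliceAt D b ∧ ∀ u', S.lt u' u → u' ∉ S.SliceAt D b) ∨
       (u = S.zero ∧ ∀ u', u' ∉ S.SliceAt D b))} := by
    ext z
    simp only [hφ, Set.mem_setOf_eq, sat_ex, sat_and, sat_or, sat_all, sat_imp, sat_not,
      sat_lt, sat_eq, sat_pairF, hsm0, hsm1, PTerm.val, Function.update_apply]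
    norm_num
  rwa [e] at h

lemma const_graph_set (hACA : SatACA0 S 𝔛) {X0 : Set M} (h0 : X0 ∈ 𝔛) (m : M) :
    {p : M | ∃ b, S.PairRel p b m} ∈ 𝔛 := by
  set φ : Fml := .ex 1 (pairF (.var 0) (.var 1) (.var 2)) with hφ
  have h := compre hACA (φ := φ) (by simp [hφ, Fml.IsArith, Fml.ex, pairF])
    (fun _ => m) (fun _ => X0) (fun _ => h0)
  have e : {z : M | Sat S 𝔛 (Function.update (fun _ => m) 0 z) (fun _ => X0) φ} =
      {p : M | ∃ b, S.PairRel p b m} := by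
    ext z
    simp only [hφ, Set.mem_setOf_eq, sat_ex, sat_pairF, PTerm.val, Function.update_apply]
    norm_num
  rwa [e] at h

end Sets


section Transfer
variable {M KT : Type} {K : AStr KT} {K0 : AStr M} {ϱ : KT → M}

lemma tr_pair (hrbij : Function.Bijective ϱ) (hr1 : ϱ K.one = K0.one)
    (hradd : ∀ a b, ϱ (K.add a b) = K0.add (ϱ a) (ϱ b))
    (hrmul : ∀ a b, ϱ (K.mul a b) = K0.mul (ϱ a) (ϱ b)) (p α β : KT) :
    K.PairRel p α β ↔ K0.PairRel (ϱ p) (ϱ α) (ϱ β) := by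
  unfold AStr.PairRel
  constructor
  · intro h
    have := congrArg ϱ h
    simpa only [AStr.two, hradd, hrmul, hr1] using this
  · intro h
    apply hrbij.1
    simpa only [AStr.two, hradd, hrmul, hr1] using h

lemma tr_mod (hrbij : Function.Bijective ϱ)
    (hradd : ∀ a b, ϱ (K.add a b) = K0.add (ϱ a) (ϱ b))
    (hrmul : ∀ a b, ϱ (K.mul a b) = K0.mul (ϱ a) (ϱ b))
    (hrlt : ∀ a b, K.lt a b ↔ K0.lt (ϱ a) (ϱ b)) (a m r : KT) :
    K.ModRel a m r ↔ K0.ModRel (ϱ a) (ϱ m) (ϱ r) := by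
  unfold AStr.ModRel
  refine and_congr (hrlt r m) ?_
  constructor
  · rintro ⟨q, hq⟩
    refine ⟨ϱ q, ?_⟩
    have := congrArg ϱ hq
    simpa only [hradd, hrmul] using this
  · rintro ⟨q', hq⟩
    obtain ⟨q, rfl⟩ := hrbij.2 q'
    refine ⟨q, hrbij.1 ?_⟩
    simpa only [hradd, hrmul] using hq

lemma tr_mem (hrbij : Function.Bijective ϱ) (hr1 : ϱ K.one = K0.one)
    (hradd : ∀ a b, ϱ (K.add a b) = K0.add (ϱ a) (ϱ b))
    (hrmul : ∀ a b, ϱ (K.mul a b) = K0.mul (ϱ a) (ϱ b))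
    (hrlt : ∀ a b, K.lt a b ↔ K0.lt (ϱ a) (ϱ b)) (x y : KT) :
    K.MemRel x y ↔ K0.MemRel (ϱ x) (ϱ y) := by
  unfold AStr.MemRel
  refine and_congr (hrlt x y) ?_
  constructor
  · rintro ⟨α, β, h1, h2, h3⟩
    refine ⟨ϱ α, ϱ β, (tr_pair hrbij hr1 hradd hrmul y α β).1 h1, ?_, ?_⟩
    · have := (hrlt _ _).1 h2
      simpa only [hradd, hrmul, hr1] using this
    · have := (tr_mod hrbij hradd hrmul hrlt α _ K.one).1 h3
      simpa only [hradd, hrmul, hr1] using this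
  · rintro ⟨α', β', h1, h2, h3⟩
    obtain ⟨α, rfl⟩ := hrbij.2 α'
    obtain ⟨β, rfl⟩ := hrbij.2 β'
    refine ⟨α, β, (tr_pair hrbij hr1 hradd hrmul y α β).2 h1, ?_, ?_⟩
    · rw [hrlt]
      simpa only [hradd, hrmul, hr1] using h2
    · rw [tr_mod hrbij hradd hrmul hrlt]
      simpa only [hradd, hrmul, hr1] using h3

end Transfer

section Helpers
variable {M : Type} {S : AStr M} {𝔛 : Set (Set M)} {X0 : Set M}

lemma slice_pairs (hP : PAminusSem S) (hACA : SatACA0 S 𝔛) (h0 : X0 ∈ 𝔛)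
    {Ψ : M → M → Prop} (b u : M) :
    u ∈ S.SliceAt {p : M | ∃ b' u', S.PairRel p b' u' ∧ Ψ b' u'} b ↔ Ψ b u := by
  constructor
  · rintro ⟨p, hp, b', u', hp', hΨ⟩
    obtain ⟨h1, h2⟩ := PK.pair_inj hP hp hp'
    rw [h1, h2]; exact hΨ
  · intro hΨ
    obtain ⟨p, hp⟩ := pair_exists hP hACA h0 b u
    exact ⟨p, hp, b, u, hp, hΨ⟩

lemma mk_coded {G : Set M} (hG : G ∈ 𝔛) (R : M → M → Prop)
    (hchar : ∀ b u, u ∈ S.SliceAt G b ↔ R b u) (F : M → M) (hF : ∀ b, R b (F b))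
    (hfun : ∀ b u u', R b u → R b u' → u = u') : S.CodedFun 𝔛 F :=
  ⟨G, hG, fun a b => ⟨fun h => (hchar a b).2 (h ▸ hF a),
    fun h => hfun a (F a) b (hF a) ((hchar a b).1 h)⟩⟩

lemma graph_char {F : M → M} {G : Set M} (hG : ∀ a b, F a = b ↔ b ∈ S.SliceAt G a) :
    ∀ a b, b ∈ S.SliceAt G a ↔ b = F a :=
  fun a b => ⟨fun h => ((hG a b).2 h).symm, fun h => (hG a b).1 h.symm⟩

lemma least_select (hP : PAminusSem S) (hACA : SatACA0 S 𝔛) (h0 : X0 ∈ 𝔛) {D : Set M}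
    (hD : D ∈ 𝔛) :
    ∃ F : M → M, S.CodedFun 𝔛 F ∧
      (∀ b, (∃ u, u ∈ S.SliceAt D b) → F b ∈ S.SliceAt D b) := by
  classical
  have hmin : ∀ b : M, ∃ u : M,
      ((∃ u', u' ∈ S.SliceAt D b) → (u ∈ S.SliceAt D b ∧ ∀ y, S.lt y u → y ∉ S.SliceAt D b)) ∧
      ((¬ ∃ u', u' ∈ S.SliceAt D b) → u = S.zero) := by
    intro b
    by_cases h : ∃ u', u' ∈ S.SliceAt D b
    · obtain ⟨u', hu'⟩ := h
      obtain ⟨m, hm, hminm⟩ := lnp hP hACA (slice_mem hACA hD b) hu'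
      exact ⟨m, fun _ => ⟨hm, hminm⟩, fun h' => absurd ⟨u', hu'⟩ h'⟩
    · exact ⟨S.zero, fun h' => absurd h' h, fun _ => rfl⟩
  choose F hF1 hF2 using hmin
  refine ⟨F, ?_, fun b hb => (hF1 b hb).1⟩
  have hLG := least_graph_set hACA hD
  set R : M → M → Prop := fun b u =>
    (u ∈ S.SliceAt D b ∧ ∀ u', S.lt u' u → u' ∉ S.SliceAt D b) ∨
    (u = S.zero ∧ ∀ u', u' ∉ S.SliceAt D b) with hR
  refine mk_coded hLG R (fun b u => slice_pairs hP hACA h0 b u) F ?_ ?_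
  · intro b
    by_cases h : ∃ u', u' ∈ S.SliceAt D b
    · exact Or.inl (⟨(hF1 b h).1, (hF1 b h).2⟩)
    · exact Or.inr ⟨hF2 b h, fun u' hu' => h ⟨u', hu'⟩⟩
  · intro b u u' hu hu'
    rcases hu with ⟨hu1, hu2⟩ | ⟨hu1, hu2⟩ <;> rcases hu' with ⟨hv1, hv2⟩ | ⟨hv1, hv2⟩
    · rcases PK.tricho hP u u' with h | h | h
      · exact absurd hu1 (hv2 u h)
      · exact h
      · exact absurd hv1 (hu2 u' h)
    · exact absurd hu1 (hv2 u)
    · exact absurd hv1 (hu2 u')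
    · rw [hu1, hv1]

lemma U_filter_up {U : Set (Set M)} (hU : IsUltraOn (S.PX 𝔛) U) {A B : Set M}
    (hAU : A ∈ U) (hB : B ∈ 𝔛) (hsub : A ⊆ B) : B ∈ U := by
  have hPX := hU.1.1 hAU
  refine hU.1.2.2.2.1 A hAU B ⟨hB, ?_⟩ hsub
  intro b
  obtain ⟨a, ha, hab⟩ := hPX.2 b
  exact ⟨a, hsub ha, hab⟩

lemma U_inter (hACA : SatACA0 S 𝔛) {U : Set (Set M)} (hU : IsUltraOn (S.PX 𝔛) U)
    {A B : Set M} (hA : A ∈ U) (hB : B ∈ U) : A ∩ B ∈ U := by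
  obtain ⟨C', hC', hCA, hCB⟩ := hU.1.2.2.2.2 A hA B hB
  exact U_filter_up hU hC' (inter_mem hACA (hU.1.1 hA).1 (hU.1.1 hB).1)
    (fun x hx => ⟨hCA hx, hCB hx⟩)

end Helpers

/-- Lemma: `Cod(N/M) ⊆ 𝔛`. If `U` is a complete and definable
ultrafilter on `P_𝔛` then every subset of `M` coded in `N = ∏_𝔛 K / U` lies in `𝔛`. -/
theorem restricted_ultrapower_coded_in_X
    {M KT NT : Type} (S : AStr M) (𝔛 : Set (Set M)) (T : Set Fml) (A : Set M)
    (K : AStr KT) (j : M → KT) (K0 : AStr M) (C : Set M) (ϱ : KT → M)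
    (U : Set (Set M)) (SN : AStr NT) (π : (M → KT) → NT)
    -- the second-order structure (M,𝔛) ⊨ ACA₀
    (hACA : SatACA0 S 𝔛)
    -- T ⊇ PA is a theory coded in 𝔛 with M ⊨ Con_T
    (hSent : ∀ φ ∈ T, IsFOSentence φ) (hPA : PAax ⊆ T)
    (hA : A ∈ 𝔛) (hTcode : ∀ n : ℕ, (S.num n ∈ A ↔ n ∈ theoryCode T))
    (hCon : S.SatConTheory T)
    -- M ⊆_e K : j embeds M onto an initial segment of K
    (hjinj : Function.Injective j)
    (hj0 : j S.zero = K.zero) (hj1 : j S.one = K.one)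
    (hjadd : ∀ a b, j (S.add a b) = K.add (j a) (j b))
    (hjmul : ∀ a b, j (S.mul a b) = K.mul (j a) (j b))
    (hjlt : ∀ a b, S.lt a b ↔ K.lt (j a) (j b))
    (hjinit : ∀ (x : KT) (a : M), K.lt x (j a) → ∃ b : M, j b = x)
    -- K₀ ⊨ T has domain M and its elementary diagram is coded by C ∈ 𝔛
    (hK0T : ModelsT K0 T) (hC : C ∈ 𝔛)
    (hdiag : ∀ (φ : Fml) (l : ℕ) (v : ℕ → M), Fml.IsFO φ → φ.freeN ⊆ Finset.range l →
      (SatFO K0 v φ ↔ ∃ s p, S.SeqLen s (S.num l) ∧ (∀ i < l, S.SeqAt s (S.num i) (v i)) ∧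
        S.PairRel p (S.num (Fml.code φ)) s ∧ p ∈ C))
    -- ϱ : K ≅ K₀ is an isomorphism
    (hrbij : Function.Bijective ϱ)
    (hr0 : ϱ K.zero = K0.zero) (hr1 : ϱ K.one = K0.one)
    (hradd : ∀ a b, ϱ (K.add a b) = K0.add (ϱ a) (ϱ b))
    (hrmul : ∀ a b, ϱ (K.mul a b) = K0.mul (ϱ a) (ϱ b))
    (hrlt : ∀ a b, K.lt a b ↔ K0.lt (ϱ a) (ϱ b))
    -- ϱ ∘ j is the canonical embedding of M into K₀, and it is coded in 𝔛
    (hcan0 : ϱ (j S.zero) = K0.zero)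
    (hcansucc : ∀ a, ϱ (j (S.add a S.one)) = K0.add (ϱ (j a)) K0.one)
    (hcancod : S.CodedFun 𝔛 (fun a => ϱ (j a)))
    -- U is an ultrafilter on P_𝔛
    (hU : IsUltraOn (S.PX 𝔛) U)
    -- (NT, SN, π) realizes the restricted ultrapower N = ∏_𝔛 K / U :
    -- π maps ∏_𝔛 K (the functions f with ϱ ∘ f coded in 𝔛) onto N,
    -- identifying f and g exactly when they agree on a set in U
    (hsurj : ∀ n : NT, ∃ f : M → KT, S.CodedFun 𝔛 (fun a => ϱ (f a)) ∧ π f = n)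
    (heq : ∀ f g : M → KT, S.CodedFun 𝔛 (fun a => ϱ (f a)) →
      S.CodedFun 𝔛 (fun a => ϱ (g a)) → (π f = π g ↔ {a : M | f a = g a} ∈ U))
    (hzero : ∀ f : M → KT, S.CodedFun 𝔛 (fun a => ϱ (f a)) → (∀ a, f a = K.zero) →
      π f = SN.zero)
    (hone : ∀ f : M → KT, S.CodedFun 𝔛 (fun a => ϱ (f a)) → (∀ a, f a = K.one) →
      π f = SN.one)
    (hadd : ∀ f g h : M → KT, S.CodedFun 𝔛 (fun a => ϱ (f a)) →
      S.CodedFun 𝔛 (fun a => ϱ (g a)) → S.CodedFun 𝔛 (fun a => ϱ (h a)) →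
      (∀ a, h a = K.add (f a) (g a)) → SN.add (π f) (π g) = π h)
    (hmul : ∀ f g h : M → KT, S.CodedFun 𝔛 (fun a => ϱ (f a)) →
      S.CodedFun 𝔛 (fun a => ϱ (g a)) → S.CodedFun 𝔛 (fun a => ϱ (h a)) →
      (∀ a, h a = K.mul (f a) (g a)) → SN.mul (π f) (π g) = π h)
    (hlt : ∀ f g : M → KT, S.CodedFun 𝔛 (fun a => ϱ (f a)) →
      S.CodedFun 𝔛 (fun a => ϱ (g a)) →
      (SN.lt (π f) (π g) ↔ {a : M | K.lt (f a) (g a)} ∈ U))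
    -- U is complete and definable
    (hcompl : S.CompleteOn 𝔛 U)
    (hdef : S.DefinableFam 𝔛 U) :
    ∀ c : NT, {a : M | SN.MemRel (π (fun _ => j a)) c} ∈ 𝔛 := by
  classical
  intro c
  have hP : PAminusSem S := hACA.1
  obtain ⟨f, hfC, rfl⟩ := hsurj c
  obtain ⟨GF, hGF, hGFg⟩ := hfC
  have hGFc := graph_char hGFg
  obtain ⟨GJ, hGJ, hGJg⟩ := hcancod
  have hGJc := graph_char hGJg
  have hfC' : S.CodedFun 𝔛 fun a => ϱ (f a) := ⟨GF, hGF, hGFg⟩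
  -- ∀ i < l conversions
  have fl2 : ∀ (P : ℕ → Prop), (∀ i < 2, P i) ↔ P 0 ∧ P 1 := by
    intro P; constructor
    · intro h; exact ⟨h 0 (by norm_num), h 1 (by norm_num)⟩
    · rintro ⟨h0, h1⟩ i hi; interval_cases i; exacts [h0, h1]
  have fl3 : ∀ (P : ℕ → Prop), (∀ i < 3, P i) ↔ P 0 ∧ P 1 ∧ P 2 := by
    intro P; constructor
    · intro h; exact ⟨h 0 (by norm_num), h 1 (by norm_num), h 2 (by norm_num)⟩
    · rintro ⟨h0, h1, h2⟩ i hi; interval_cases i; exacts [h0, h1, h2]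
  have fl4 : ∀ (P : ℕ → Prop), (∀ i < 4, P i) ↔ P 0 ∧ P 1 ∧ P 2 ∧ P 3 := by
    intro P; constructor
    · intro h; exact ⟨h 0 (by norm_num), h 1 (by norm_num), h 2 (by norm_num), h 3 (by norm_num)⟩
    · rintro ⟨h0, h1, h2, h3⟩ i hi; interval_cases i; exacts [h0, h1, h2, h3]
  -- diagram bridges
  have dMem : ∀ x y : M, K0.MemRel x y ↔ (∃ s p, S.SeqLen s (S.num 2) ∧
      S.SeqAt s (S.num 0) x ∧ S.SeqAt s (S.num 1) y ∧
      S.PairRel p (S.num (Fml.code psiMem)) s ∧ p ∈ C) := by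
    intro x y
    have h := hdiag psiMem 2 (fun i => if i = 0 then x else y) psiMem_FO psiMem_free
    have hL : SatFO K0 (fun i => if i = 0 then x else y) psiMem ↔ K0.MemRel x y := by
      unfold SatFO; rw [sat_psiMem]; norm_num
    rw [hL] at h
    refine h.trans (exists_congr fun s => exists_congr fun p => ?_)
    rw [fl2 (fun i => S.SeqAt s (S.num i) (if i = 0 then x else y))]
    norm_num; tauto
  have dAdd : ∀ x y z : M, K0.add x y = z ↔ (∃ s p, S.SeqLen s (S.num 3) ∧
      S.SeqAt s (S.num 0) x ∧ S.SeqAt s (S.num 1) y ∧ S.SeqAt s (S.num 2) z ∧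
      S.PairRel p (S.num (Fml.code psiAdd)) s ∧ p ∈ C) := by
    intro x y z
    have h := hdiag psiAdd 3 (fun i => if i = 0 then x else if i = 1 then y else z)
      psiAdd_FO psiAdd_free
    have hL : SatFO K0 (fun i => if i = 0 then x else if i = 1 then y else z) psiAdd ↔
        K0.add x y = z := by
      unfold SatFO; rw [sat_psiAdd]; norm_num
    rw [hL] at h
    refine h.trans (exists_congr fun s => exists_congr fun p => ?_)
    rw [fl3 (fun i => S.SeqAt s (S.num i) (if i = 0 then x else if i = 1 then y else z))]
    norm_num; tauto
  have dMul : ∀ x y z : M, K0.mul x y = z ↔ (∃ s p, S.SeqLen s (S.num 3) ∧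
      S.SeqAt s (S.num 0) x ∧ S.SeqAt s (S.num 1) y ∧ S.SeqAt s (S.num 2) z ∧
      S.PairRel p (S.num (Fml.code psiMul)) s ∧ p ∈ C) := by
    intro x y z
    have h := hdiag psiMul 3 (fun i => if i = 0 then x else if i = 1 then y else z)
      psiMul_FO psiMul_free
    have hL : SatFO K0 (fun i => if i = 0 then x else if i = 1 then y else z) psiMul ↔
        K0.mul x y = z := by
      unfold SatFO; rw [sat_psiMul]; norm_num
    rw [hL] at h
    refine h.trans (exists_congr fun s => exists_congr fun p => ?_)
    rw [fl3 (fun i => S.SeqAt s (S.num i) (if i = 0 then x else if i = 1 then y else z))]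
    norm_num; tauto
  have dLt : ∀ x y : M, K0.lt x y ↔ (∃ s p, S.SeqLen s (S.num 2) ∧
      S.SeqAt s (S.num 0) x ∧ S.SeqAt s (S.num 1) y ∧
      S.PairRel p (S.num (Fml.code psiLt)) s ∧ p ∈ C) := by
    intro x y
    have h := hdiag psiLt 2 (fun i => if i = 0 then x else y) psiLt_FO psiLt_free
    have hL : SatFO K0 (fun i => if i = 0 then x else y) psiLt ↔ K0.lt x y := by
      unfold SatFO; rw [sat_psiLt]; norm_num
    rw [hL] at h
    refine h.trans (exists_congr fun s => exists_congr fun p => ?_)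
    rw [fl2 (fun i => S.SeqAt s (S.num i) (if i = 0 then x else y))]
    norm_num; tauto
  have dAlpha : ∀ x y u : M, (∃ β, K0.PairRel y u β ∧
      K0.lt K0.one (K0.add K0.one (K0.mul (K0.add x K0.one) β)) ∧
      ∃ q, u = K0.add (K0.mul q (K0.add K0.one (K0.mul (K0.add x K0.one) β))) K0.one) ↔
      (∃ s p, S.SeqLen s (S.num 3) ∧ S.SeqAt s (S.num 0) x ∧ S.SeqAt s (S.num 1) y ∧
        S.SeqAt s (S.num 2) u ∧ S.PairRel p (S.num (Fml.code psiAlpha)) s ∧ p ∈ C) := by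
    intro x y u
    have h := hdiag psiAlpha 3 (fun i => if i = 0 then x else if i = 1 then y else u)
      psiAlpha_FO psiAlpha_free
    have hL : SatFO K0 (fun i => if i = 0 then x else if i = 1 then y else u) psiAlpha ↔
        (∃ β, K0.PairRel y u β ∧
        K0.lt K0.one (K0.add K0.one (K0.mul (K0.add x K0.one) β)) ∧
        ∃ q, u = K0.add (K0.mul q (K0.add K0.one (K0.mul (K0.add x K0.one) β))) K0.one) := by
      unfold SatFO; rw [sat_psiAlpha]; norm_num
    rw [hL] at h
    refine h.trans (exists_congr fun s => exists_congr fun p => ?_)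
    rw [fl3 (fun i => S.SeqAt s (S.num i) (if i = 0 then x else if i = 1 then y else u))]
    norm_num; tauto
  have dMod2 : ∀ x y u t : M, (K0.PairRel y u t ∧
      K0.lt K0.one (K0.add K0.one (K0.mul (K0.add x K0.one) t)) ∧
      ∃ q, u = K0.add (K0.mul q (K0.add K0.one (K0.mul (K0.add x K0.one) t))) K0.one) ↔
      (∃ s p, S.SeqLen s (S.num 4) ∧ S.SeqAt s (S.num 0) x ∧ S.SeqAt s (S.num 1) y ∧
        S.SeqAt s (S.num 2) u ∧ S.SeqAt s (S.num 3) t ∧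
        S.PairRel p (S.num (Fml.code psiMod2)) s ∧ p ∈ C) := by
    intro x y u t
    have h := hdiag psiMod2 4
      (fun i => if i = 0 then x else if i = 1 then y else if i = 2 then u else t)
      psiMod2_FO psiMod2_free
    have hL : SatFO K0
        (fun i => if i = 0 then x else if i = 1 then y else if i = 2 then u else t) psiMod2 ↔
        (K0.PairRel y u t ∧
        K0.lt K0.one (K0.add K0.one (K0.mul (K0.add x K0.one) t)) ∧
        ∃ q, u = K0.add (K0.mul q (K0.add K0.one (K0.mul (K0.add x K0.one) t))) K0.one) := by
      unfold SatFO; rw [sat_psiMod2]; norm_num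
    rw [hL] at h
    refine h.trans (exists_congr fun s => exists_congr fun p => ?_)
    rw [fl4 (fun i => S.SeqAt s (S.num i)
      (if i = 0 then x else if i = 1 then y else if i = 2 then u else t))]
    norm_num; tauto
  have dQ : ∀ x u t q : M,
      (u = K0.add (K0.mul q (K0.add K0.one (K0.mul (K0.add x K0.one) t))) K0.one) ↔
      (∃ s p, S.SeqLen s (S.num 4) ∧ S.SeqAt s (S.num 0) x ∧ S.SeqAt s (S.num 1) u ∧
        S.SeqAt s (S.num 2) t ∧ S.SeqAt s (S.num 3) q ∧
        S.PairRel p (S.num (Fml.code psiQ)) s ∧ p ∈ C) := by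
    intro x u t q
    have h := hdiag psiQ 4
      (fun i => if i = 0 then x else if i = 1 then u else if i = 2 then t else q)
      psiQ_FO psiQ_free
    have hL : SatFO K0
        (fun i => if i = 0 then x else if i = 1 then u else if i = 2 then t else q) psiQ ↔
        (u = K0.add (K0.mul q (K0.add K0.one (K0.mul (K0.add x K0.one) t))) K0.one) := by
      unfold SatFO; rw [sat_psiQ]; norm_num
    rw [hL] at h
    refine h.trans (exists_congr fun s => exists_congr fun p => ?_)
    rw [fl4 (fun i => S.SeqAt s (S.num i)
      (if i = 0 then x else if i = 1 then u else if i = 2 then t else q))]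
    norm_num; tauto
  -- coded function closure
  have cdConst : ∀ x : KT, S.CodedFun 𝔛 (fun _ : M => ϱ x) := by
    intro x
    refine mk_coded (const_graph_set hACA hA (ϱ x)) (fun _ u => u = ϱ x) ?_ _ (fun _ => rfl) ?_
    · intro b u
      constructor
      · rintro ⟨p, hp, b', hp'⟩
        exact (PK.pair_inj hP hp hp').2
      · rintro rfl
        obtain ⟨p, hp⟩ := pair_exists hP hACA hA b (ϱ x)
        exact ⟨p, hp, b, hp⟩
    · rintro b u u' rfl rfl; rfl
  have cdAdd : ∀ g h : M → KT, S.CodedFun 𝔛 (fun b => ϱ (g b)) →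
      S.CodedFun 𝔛 (fun b => ϱ (h b)) → S.CodedFun 𝔛 (fun b => ϱ (K.add (g b) (h b))) := by
    rintro g h ⟨Gg, hGg, hGgg⟩ ⟨Gh, hGh, hGhg⟩
    have hW := binop_set hACA hC hGg hGh (Fml.code psiAdd)
    have hshape : {p : M | ∃ b wv u u', S.PairRel p b wv ∧ u ∈ S.SliceAt Gg b ∧
        u' ∈ S.SliceAt Gh b ∧ (∃ s pp, S.SeqLen s (S.num 3) ∧ S.SeqAt s (S.num 0) u ∧
        S.SeqAt s (S.num 1) u' ∧ S.SeqAt s (S.num 2) wv ∧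
        S.PairRel pp (S.num (Fml.code psiAdd)) s ∧ pp ∈ C)} =
        {p : M | ∃ b' t, S.PairRel p b' t ∧ (∃ u u', u ∈ S.SliceAt Gg b' ∧
        u' ∈ S.SliceAt Gh b' ∧ (∃ s pp, S.SeqLen s (S.num 3) ∧ S.SeqAt s (S.num 0) u ∧
        S.SeqAt s (S.num 1) u' ∧ S.SeqAt s (S.num 2) t ∧
        S.PairRel pp (S.num (Fml.code psiAdd)) s ∧ pp ∈ C))} := by
      ext p
      constructor
      · rintro ⟨b, wv, u, u', h1, h2, h3, h4⟩
        exact ⟨b, wv, h1, u, u', h2, h3, h4⟩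
      · rintro ⟨b, t, h1, u, u', h2, h3, h4⟩
        exact ⟨b, t, u, u', h1, h2, h3, h4⟩
    rw [hshape] at hW
    refine mk_coded hW _ (fun b u => slice_pairs hP hACA hA b u) _ ?_ ?_
    · intro b
      exact ⟨ϱ (g b), ϱ (h b), (graph_char hGgg b _).2 rfl, (graph_char hGhg b _).2 rfl,
        (dAdd _ _ _).1 (hradd _ _).symm⟩
    · rintro b u u' ⟨y, z, hy, hz, hd⟩ ⟨y', z', hy', hz', hd'⟩
      rw [(graph_char hGgg b y).1 hy] at hd
      rw [(graph_char hGhg b z).1 hz] at hd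
      rw [(graph_char hGgg b y').1 hy'] at hd'
      rw [(graph_char hGhg b z').1 hz'] at hd'
      rw [← (dAdd _ _ _).2 hd, ← (dAdd _ _ _).2 hd']
  have cdMul : ∀ g h : M → KT, S.CodedFun 𝔛 (fun b => ϱ (g b)) →
      S.CodedFun 𝔛 (fun b => ϱ (h b)) → S.CodedFun 𝔛 (fun b => ϱ (K.mul (g b) (h b))) := by
    rintro g h ⟨Gg, hGg, hGgg⟩ ⟨Gh, hGh, hGhg⟩
    have hW := binop_set hACA hC hGg hGh (Fml.code psiMul)
    have hshape : {p : M | ∃ b wv u u', S.PairRel p b wv ∧ u ∈ S.SliceAt Gg b ∧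
        u' ∈ S.SliceAt Gh b ∧ (∃ s pp, S.SeqLen s (S.num 3) ∧ S.SeqAt s (S.num 0) u ∧
        S.SeqAt s (S.num 1) u' ∧ S.SeqAt s (S.num 2) wv ∧
        S.PairRel pp (S.num (Fml.code psiMul)) s ∧ pp ∈ C)} =
        {p : M | ∃ b' t, S.PairRel p b' t ∧ (∃ u u', u ∈ S.SliceAt Gg b' ∧
        u' ∈ S.SliceAt Gh b' ∧ (∃ s pp, S.SeqLen s (S.num 3) ∧ S.SeqAt s (S.num 0) u ∧
        S.SeqAt s (S.num 1) u' ∧ S.SeqAt s (S.num 2) t ∧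
        S.PairRel pp (S.num (Fml.code psiMul)) s ∧ pp ∈ C))} := by
      ext p
      constructor
      · rintro ⟨b, wv, u, u', h1, h2, h3, h4⟩
        exact ⟨b, wv, h1, u, u', h2, h3, h4⟩
      · rintro ⟨b, t, h1, u, u', h2, h3, h4⟩
        exact ⟨b, t, u, u', h1, h2, h3, h4⟩
    rw [hshape] at hW
    refine mk_coded hW _ (fun b u => slice_pairs hP hACA hA b u) _ ?_ ?_
    · intro b
      exact ⟨ϱ (g b), ϱ (h b), (graph_char hGgg b _).2 rfl, (graph_char hGhg b _).2 rfl,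
        (dMul _ _ _).1 (hrmul _ _).symm⟩
    · rintro b u u' ⟨y, z, hy, hz, hd⟩ ⟨y', z', hy', hz', hd'⟩
      rw [(graph_char hGgg b y).1 hy] at hd
      rw [(graph_char hGhg b z).1 hz] at hd
      rw [(graph_char hGgg b y').1 hy'] at hd'
      rw [(graph_char hGhg b z').1 hz'] at hd'
      rw [← (dMul _ _ _).2 hd, ← (dMul _ _ _).2 hd']
  -- equalizer and lt sets
  have eqlX : ∀ g h : M → KT, S.CodedFun 𝔛 (fun b => ϱ (g b)) →
      S.CodedFun 𝔛 (fun b => ϱ (h b)) → {b : M | g b = h b} ∈ 𝔛 := by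
    rintro g h ⟨Gg, hGg, hGgg⟩ ⟨Gh, hGh, hGhg⟩
    have hW := eql_set hACA hGg hGh
    have hshape : {b : M | ∃ u, u ∈ S.SliceAt Gg b ∧ u ∈ S.SliceAt Gh b} =
        {b : M | g b = h b} := by
      ext b
      constructor
      · rintro ⟨u, hu1, hu2⟩
        rw [(graph_char hGgg b u).1 hu1] at hu2
        exact hrbij.1 ((graph_char hGhg b _).1 hu2)
      · intro hgh
        exact ⟨ϱ (g b), (graph_char hGgg b _).2 rfl,
          (graph_char hGhg b _).2 (by rw [Set.mem_setOf_eq] at hgh; rw [hgh])⟩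
    rwa [hshape] at hW
  have ltX : ∀ g h : M → KT, S.CodedFun 𝔛 (fun b => ϱ (g b)) →
      S.CodedFun 𝔛 (fun b => ϱ (h b)) → {b : M | K.lt (g b) (h b)} ∈ 𝔛 := by
    rintro g h ⟨Gg, hGg, hGgg⟩ ⟨Gh, hGh, hGhg⟩
    have hW := ltK_set hACA hC hGg hGh (Fml.code psiLt)
    have hshape : {b : M | ∃ u u', u ∈ S.SliceAt Gg b ∧ u' ∈ S.SliceAt Gh b ∧
        (∃ s p, S.SeqLen s (S.num 2) ∧ S.SeqAt s (S.num 0) u ∧ S.SeqAt s (S.num 1) u' ∧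
        S.PairRel p (S.num (Fml.code psiLt)) s ∧ p ∈ C)} = {b : M | K.lt (g b) (h b)} := by
      ext b
      constructor
      · rintro ⟨u, u', hu1, hu2, hd⟩
        rw [(graph_char hGgg b u).1 hu1, (graph_char hGhg b u').1 hu2] at hd
        rw [Set.mem_setOf_eq, hrlt]
        exact (dLt _ _).2 hd
      · intro hgh
        rw [Set.mem_setOf_eq, hrlt] at hgh
        exact ⟨ϱ (g b), ϱ (h b), (graph_char hGgg b _).2 rfl, (graph_char hGhg b _).2 rfl,
          (dLt _ _).1 hgh⟩
    rwa [hshape] at hW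
  -- π algebra
  have pAdd : ∀ g h : M → KT, S.CodedFun 𝔛 (fun b => ϱ (g b)) →
      S.CodedFun 𝔛 (fun b => ϱ (h b)) →
      SN.add (π g) (π h) = π (fun b => K.add (g b) (h b)) :=
    fun g h cg ch => hadd g h _ cg ch (cdAdd g h cg ch) (fun _ => rfl)
  have pMul : ∀ g h : M → KT, S.CodedFun 𝔛 (fun b => ϱ (g b)) →
      S.CodedFun 𝔛 (fun b => ϱ (h b)) →
      SN.mul (π g) (π h) = π (fun b => K.mul (g b) (h b)) :=
    fun g h cg ch => hmul g h _ cg ch (cdMul g h cg ch) (fun _ => rfl)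
  have hone1 : SN.one = π (fun _ : M => K.one) :=
    (hone (fun _ => K.one) (cdConst K.one) (fun _ => rfl)).symm
  -- the set A'
  have hA'X : {p : M | ∃ a b, S.PairRel p a b ∧ K.MemRel (j a) (f b)} ∈ 𝔛 := by
    have hW := aprime_set hACA hC hGJ hGF (Fml.code psiMem)
    have hshape : {p : M | ∃ a b x y, S.PairRel p a b ∧ x ∈ S.SliceAt GJ a ∧
        y ∈ S.SliceAt GF b ∧ (∃ s pp, S.SeqLen s (S.num 2) ∧ S.SeqAt s (S.num 0) x ∧
        S.SeqAt s (S.num 1) y ∧ S.PairRel pp (S.num (Fml.code psiMem)) s ∧ pp ∈ C)} =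
        {p : M | ∃ a b, S.PairRel p a b ∧ K.MemRel (j a) (f b)} := by
      ext p
      constructor
      · rintro ⟨a, b, x, y, h1, h2, h3, hd⟩
        rw [(graph_char hGJg a x).1 h2, (graph_char hGFg b y).1 h3] at hd
        exact ⟨a, b, h1, (tr_mem hrbij hr1 hradd hrmul hrlt _ _).2 ((dMem _ _).2 hd)⟩
      · rintro ⟨a, b, h1, hm⟩
        exact ⟨a, b, ϱ (j a), ϱ (f b), h1, (graph_char hGJg a _).2 rfl,
          (graph_char hGFg b _).2 rfl,
          (dMem _ _).1 ((tr_mem hrbij hr1 hradd hrmul hrlt _ _).1 hm)⟩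
    rwa [hshape] at hW
  have hSl : ∀ a : M, S.SliceAt {p : M | ∃ a b, S.PairRel p a b ∧ K.MemRel (j a) (f b)} a
      = {b : M | K.MemRel (j a) (f b)} := by
    intro a
    ext b
    constructor
    · rintro ⟨p, hp, a', b', hp', hm⟩
      obtain ⟨h1, h2⟩ := PK.pair_inj hP hp hp'
      rw [Set.mem_setOf_eq, h1, h2]
      exact hm
    · intro hm
      obtain ⟨p, hp⟩ := pair_exists hP hACA hA a b
      exact ⟨p, hp, a, b, hp, hm⟩
  have hDef := hdef _ hA'X
  suffices hiff : ∀ a : M, SN.MemRel (π (fun _ => j a)) (π f) ↔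
      {b : M | K.MemRel (j a) (f b)} ∈ U by
    have e : {a : M | SN.MemRel (π (fun _ => j a)) (π f)} =
        {a : M | S.SliceAt {p : M | ∃ a b, S.PairRel p a b ∧ K.MemRel (j a) (f b)} a ∈ U} := by
      ext a
      rw [Set.mem_setOf_eq, Set.mem_setOf_eq, hSl a]
      exact hiff a
    rw [e]
    exact hDef
  intro a
  have cg0 : S.CodedFun 𝔛 (fun b => ϱ ((fun _ : M => j a) b)) := cdConst (j a)
  have hBaX : {b : M | K.MemRel (j a) (f b)} ∈ 𝔛 := by
    rw [← hSl a]
    exact slice_mem hACA hA'X a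
  have e1c : S.CodedFun 𝔛 (fun b : M => ϱ ((fun _ : M => K.one) b)) := cdConst K.one
  have e2 : SN.two = π (fun _ : M => K.two) := by
    show SN.add SN.one SN.one = _
    rw [hone1]
    exact hadd _ _ _ e1c e1c (cdAdd _ _ e1c e1c) (fun _ => rfl)
  have pairEq : ∀ g1 g2 : M → KT, S.CodedFun 𝔛 (fun b => ϱ (g1 b)) →
      S.CodedFun 𝔛 (fun b => ϱ (g2 b)) →
      (SN.PairRel (π f) (π g1) (π g2) ↔ {b : M | K.PairRel (f b) (g1 b) (g2 b)} ∈ U) := by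
    intro g1 g2 cg1 cg2
    have A1 : SN.add (π g1) (π g2) = π (fun b => K.add (g1 b) (g2 b)) := pAdd g1 g2 cg1 cg2
    have cG12 := cdAdd g1 g2 cg1 cg2
    have A2 : SN.add (SN.add (π g1) (π g2)) SN.one =
        π (fun b => K.add (K.add (g1 b) (g2 b)) K.one) := by
      rw [A1, hone1]
      exact pAdd _ _ cG12 e1c
    have cG121 : S.CodedFun 𝔛 (fun b => ϱ (K.add (K.add (g1 b) (g2 b)) K.one)) :=
      cdAdd _ _ cG12 e1c
    have A3 : SN.mul (SN.add (π g1) (π g2)) (SN.add (SN.add (π g1) (π g2)) SN.one) =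
        π (fun b => K.mul (K.add (g1 b) (g2 b)) (K.add (K.add (g1 b) (g2 b)) K.one)) := by
      rw [A2, A1]
      exact pMul _ _ cG12 cG121
    have A4 : SN.mul SN.two (π g1) = π (fun b => K.mul K.two (g1 b)) := by
      rw [e2]
      exact pMul _ g1 (cdConst K.two) cg1
    have A5 : SN.add
        (SN.mul (SN.add (π g1) (π g2)) (SN.add (SN.add (π g1) (π g2)) SN.one))
        (SN.mul SN.two (π g1)) =
        π (fun b => K.add (K.mul (K.add (g1 b) (g2 b)) (K.add (K.add (g1 b) (g2 b)) K.one))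
          (K.mul K.two (g1 b))) := by
      rw [A3, A4]
      exact pAdd _ _ (cdMul _ _ cG12 cG121) (cdMul _ _ (cdConst K.two) cg1)
    have A6 : SN.mul SN.two (π f) = π (fun b => K.mul K.two (f b)) := by
      rw [e2]
      exact pMul _ f (cdConst K.two) hfC'
    show SN.mul SN.two (π f) = _ ↔ _
    rw [A6, A5, heq _ _ (cdMul _ _ (cdConst K.two) hfC')
      (cdAdd _ _ (cdMul _ _ cG12 cG121) (cdMul _ _ (cdConst K.two) cg1))]
    exact Iff.rfl
  have modTermEq : ∀ g2 : M → KT, S.CodedFun 𝔛 (fun b => ϱ (g2 b)) →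
      SN.add SN.one (SN.mul (SN.add (π (fun _ : M => j a)) SN.one) (π g2)) =
      π (fun b => K.add K.one (K.mul (K.add (j a) K.one) (g2 b))) := by
    intro g2 cg2
    have B1 : SN.add (π (fun _ : M => j a)) SN.one =
        π (fun _ : M => K.add (j a) K.one) := by
      rw [hone1]
      exact pAdd _ _ cg0 e1c
    have B2 : SN.mul (SN.add (π (fun _ : M => j a)) SN.one) (π g2) =
        π (fun b => K.mul (K.add (j a) K.one) (g2 b)) := by
      rw [B1]
      exact pMul _ g2 (cdAdd _ _ cg0 e1c) cg2
    rw [B2, hone1]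
    exact pAdd _ _ e1c (cdMul _ _ (cdAdd _ _ cg0 e1c) cg2)
  constructor
  · -- forward direction
    intro hm
    obtain ⟨hlt1, α, β, hpr, hlt2, hmr⟩ := hm
    obtain ⟨g1, cg1, rfl⟩ := hsurj α
    obtain ⟨g2, cg2, rfl⟩ := hsurj β
    obtain ⟨hlt2', q, hqe⟩ := hmr
    obtain ⟨g3, cg3, rfl⟩ := hsurj q
    have hS0 : {b : M | K.lt (j a) (f b)} ∈ U := (hlt _ f cg0 hfC').1 hlt1
    have hS1 : {b : M | K.PairRel (f b) (g1 b) (g2 b)} ∈ U := (pairEq g1 g2 cg1 cg2).1 hpr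
    have cT : S.CodedFun 𝔛 (fun b => ϱ (K.add K.one (K.mul (K.add (j a) K.one) (g2 b)))) :=
      cdAdd _ _ e1c (cdMul _ _ (cdAdd _ _ cg0 e1c) cg2)
    rw [modTermEq g2 cg2, hone1] at hlt2
    have hS2 : {b : M | K.lt K.one (K.add K.one (K.mul (K.add (j a) K.one) (g2 b)))} ∈ U :=
      (hlt _ _ e1c cT).1 hlt2
    rw [modTermEq g2 cg2, hone1] at hqe
    have C1 : SN.mul (π g3) (π (fun b => K.add K.one (K.mul (K.add (j a) K.one) (g2 b)))) =
        π (fun b => K.mul (g3 b) (K.add K.one (K.mul (K.add (j a) K.one) (g2 b)))) :=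
      pMul _ _ cg3 cT
    rw [C1] at hqe
    have C2 : SN.add
        (π (fun b => K.mul (g3 b) (K.add K.one (K.mul (K.add (j a) K.one) (g2 b)))))
        (π (fun _ : M => K.one)) =
        π (fun b => K.add (K.mul (g3 b) (K.add K.one (K.mul (K.add (j a) K.one) (g2 b))))
          K.one) := pAdd _ _ (cdMul _ _ cg3 cT) e1c
    rw [C2] at hqe
    have hS3 : {b : M | g1 b =
        K.add (K.mul (g3 b) (K.add K.one (K.mul (K.add (j a) K.one) (g2 b)))) K.one} ∈ U :=
      (heq _ _ cg1 (cdAdd _ _ (cdMul _ _ cg3 cT) e1c)).1 hqe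
    have hSS := U_inter hACA hU (U_inter hACA hU (U_inter hACA hU hS0 hS1) hS2) hS3
    refine U_filter_up hU hSS hBaX ?_
    rintro b ⟨⟨⟨h0, h1⟩, h2⟩, h3⟩
    exact ⟨h0, g1 b, g2 b, h1, h2, h2, g3 b, h3⟩
  · -- backward
    -- selection of witness functions
    have hWa0 := walpha_set hACA hC hGF (Fml.code psiAlpha) (ϱ (j a))
    set Wa : Set M := {p : M | ∃ b' u', S.PairRel p b' u' ∧ (∃ y, y ∈ S.SliceAt GF b' ∧
      (∃ s pp, S.SeqLen s (S.num 3) ∧ S.SeqAt s (S.num 0) (ϱ (j a)) ∧ S.SeqAt s (S.num 1) y ∧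
        S.SeqAt s (S.num 2) u' ∧ S.PairRel pp (S.num (Fml.code psiAlpha)) s ∧ pp ∈ C))}
      with hWadef
    have hWa : Wa ∈ 𝔛 := by
      have hshape : {p : M | ∃ b u y, S.PairRel p b u ∧ y ∈ S.SliceAt GF b ∧
          (∃ s pp, S.SeqLen s (S.num 3) ∧ S.SeqAt s (S.num 0) (ϱ (j a)) ∧
            S.SeqAt s (S.num 1) y ∧ S.SeqAt s (S.num 2) u ∧
            S.PairRel pp (S.num (Fml.code psiAlpha)) s ∧ pp ∈ C)} = Wa := by
        rw [hWadef]; ext p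
        constructor
        · rintro ⟨b, u, y, h1, h2, h3⟩; exact ⟨b, u, h1, y, h2, h3⟩
        · rintro ⟨b, u, h1, y, h2, h3⟩; exact ⟨b, u, y, h1, h2, h3⟩
      rw [← hshape]; exact hWa0
    have slWa : ∀ b u, u ∈ S.SliceAt Wa b ↔ (∃ y, y ∈ S.SliceAt GF b ∧
        (∃ s pp, S.SeqLen s (S.num 3) ∧ S.SeqAt s (S.num 0) (ϱ (j a)) ∧
          S.SeqAt s (S.num 1) y ∧ S.SeqAt s (S.num 2) u ∧
          S.PairRel pp (S.num (Fml.code psiAlpha)) s ∧ pp ∈ C)) := by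
      rw [hWadef]; exact fun b u => slice_pairs hP hACA hA b u
    obtain ⟨F1, cF1, spec1⟩ := least_select hP hACA hA hWa
    set g1 : M → KT := fun b => Function.surjInv hrbij.2 (F1 b) with hg1def
    have hg1 : ∀ b, ϱ (g1 b) = F1 b := fun b => Function.surjInv_eq hrbij.2 (F1 b)
    have cg1 : S.CodedFun 𝔛 (fun b => ϱ (g1 b)) := by
      have e : (fun b => ϱ (g1 b)) = F1 := funext hg1
      rw [e]; exact cF1
    obtain ⟨G1, hG1, hG1g⟩ := cF1
    -- β selection
    have hWb0 := sel4_set hACA hC hGF hG1 (Fml.code psiMod2) (ϱ (j a))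
    set Wb : Set M := {p : M | ∃ b' t, S.PairRel p b' t ∧ (∃ y u, y ∈ S.SliceAt GF b' ∧
      u ∈ S.SliceAt G1 b' ∧ (∃ s pp, S.SeqLen s (S.num 4) ∧ S.SeqAt s (S.num 0) (ϱ (j a)) ∧
        S.SeqAt s (S.num 1) y ∧ S.SeqAt s (S.num 2) u ∧ S.SeqAt s (S.num 3) t ∧
        S.PairRel pp (S.num (Fml.code psiMod2)) s ∧ pp ∈ C))} with hWbdef
    have hWb : Wb ∈ 𝔛 := by
      have hshape : {p : M | ∃ b t y u, S.PairRel p b t ∧ y ∈ S.SliceAt GF b ∧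
          u ∈ S.SliceAt G1 b ∧ (∃ s pp, S.SeqLen s (S.num 4) ∧
            S.SeqAt s (S.num 0) (ϱ (j a)) ∧ S.SeqAt s (S.num 1) y ∧ S.SeqAt s (S.num 2) u ∧
            S.SeqAt s (S.num 3) t ∧ S.PairRel pp (S.num (Fml.code psiMod2)) s ∧ pp ∈ C)}
          = Wb := by
        rw [hWbdef]; ext p
        constructor
        · rintro ⟨b, t, y, u, h1, h2, h3, h4⟩; exact ⟨b, t, h1, y, u, h2, h3, h4⟩
        · rintro ⟨b, t, h1, y, u, h2, h3, h4⟩; exact ⟨b, t, y, u, h1, h2, h3, h4⟩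
      rw [← hshape]; exact hWb0
    have slWb : ∀ b t, t ∈ S.SliceAt Wb b ↔ (∃ y u, y ∈ S.SliceAt GF b ∧
        u ∈ S.SliceAt G1 b ∧ (∃ s pp, S.SeqLen s (S.num 4) ∧
          S.SeqAt s (S.num 0) (ϱ (j a)) ∧ S.SeqAt s (S.num 1) y ∧ S.SeqAt s (S.num 2) u ∧
          S.SeqAt s (S.num 3) t ∧ S.PairRel pp (S.num (Fml.code psiMod2)) s ∧ pp ∈ C)) := by
      rw [hWbdef]; exact fun b t => slice_pairs hP hACA hA b t
    obtain ⟨F2, cF2, spec2⟩ := least_select hP hACA hA hWb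
    set g2 : M → KT := fun b => Function.surjInv hrbij.2 (F2 b) with hg2def
    have hg2 : ∀ b, ϱ (g2 b) = F2 b := fun b => Function.surjInv_eq hrbij.2 (F2 b)
    have cg2 : S.CodedFun 𝔛 (fun b => ϱ (g2 b)) := by
      have e : (fun b => ϱ (g2 b)) = F2 := funext hg2
      rw [e]; exact cF2
    obtain ⟨G2, hG2, hG2g⟩ := cF2
    -- q selection
    have hWq0 := sel4_set hACA hC hG1 hG2 (Fml.code psiQ) (ϱ (j a))
    set Wq : Set M := {p : M | ∃ b' t, S.PairRel p b' t ∧ (∃ y u, y ∈ S.SliceAt G1 b' ∧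
      u ∈ S.SliceAt G2 b' ∧ (∃ s pp, S.SeqLen s (S.num 4) ∧ S.SeqAt s (S.num 0) (ϱ (j a)) ∧
        S.SeqAt s (S.num 1) y ∧ S.SeqAt s (S.num 2) u ∧ S.SeqAt s (S.num 3) t ∧
        S.PairRel pp (S.num (Fml.code psiQ)) s ∧ pp ∈ C))} with hWqdef
    have hWq : Wq ∈ 𝔛 := by
      have hshape : {p : M | ∃ b t y u, S.PairRel p b t ∧ y ∈ S.SliceAt G1 b ∧
          u ∈ S.SliceAt G2 b ∧ (∃ s pp, S.SeqLen s (S.num 4) ∧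
            S.SeqAt s (S.num 0) (ϱ (j a)) ∧ S.SeqAt s (S.num 1) y ∧ S.SeqAt s (S.num 2) u ∧
            S.SeqAt s (S.num 3) t ∧ S.PairRel pp (S.num (Fml.code psiQ)) s ∧ pp ∈ C)}
          = Wq := by
        rw [hWqdef]; ext p
        constructor
        · rintro ⟨b, t, y, u, h1, h2, h3, h4⟩; exact ⟨b, t, h1, y, u, h2, h3, h4⟩
        · rintro ⟨b, t, h1, y, u, h2, h3, h4⟩; exact ⟨b, t, y, u, h1, h2, h3, h4⟩
      rw [← hshape]; exact hWq0
    have slWq : ∀ b t, t ∈ S.SliceAt Wq b ↔ (∃ y u, y ∈ S.SliceAt G1 b ∧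
        u ∈ S.SliceAt G2 b ∧ (∃ s pp, S.SeqLen s (S.num 4) ∧
          S.SeqAt s (S.num 0) (ϱ (j a)) ∧ S.SeqAt s (S.num 1) y ∧ S.SeqAt s (S.num 2) u ∧
          S.SeqAt s (S.num 3) t ∧ S.PairRel pp (S.num (Fml.code psiQ)) s ∧ pp ∈ C)) := by
      rw [hWqdef]; exact fun b t => slice_pairs hP hACA hA b t
    obtain ⟨F3, cF3, spec3⟩ := least_select hP hACA hA hWq
    set g3 : M → KT := fun b => Function.surjInv hrbij.2 (F3 b) with hg3def
    have hg3 : ∀ b, ϱ (g3 b) = F3 b := fun b => Function.surjInv_eq hrbij.2 (F3 b)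
    have cg3 : S.CodedFun 𝔛 (fun b => ϱ (g3 b)) := by
      have e : (fun b => ϱ (g3 b)) = F3 := funext hg3
      rw [e]; exact cF3
    -- key pointwise facts
    have key : ∀ b : M, K.MemRel (j a) (f b) →
        K.PairRel (f b) (g1 b) (g2 b) ∧
        K.lt K.one (K.add K.one (K.mul (K.add (j a) K.one) (g2 b))) ∧
        g1 b = K.add (K.mul (g3 b)
          (K.add K.one (K.mul (K.add (j a) K.one) (g2 b)))) K.one := by
      intro b hb
      have hb0 := (tr_mem hrbij hr1 hradd hrmul hrlt _ _).1 hb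
      obtain ⟨hlt0, α', β', hpr', hlt1', hmr'⟩ := hb0
      obtain ⟨_, q', hq'⟩ := hmr'
      have hne1 : ∃ u, u ∈ S.SliceAt Wa b :=
        ⟨α', (slWa b α').2 ⟨ϱ (f b), (graph_char hGFg b _).2 rfl,
          (dAlpha (ϱ (j a)) (ϱ (f b)) α').1 ⟨β', hpr', hlt1', q', hq'⟩⟩⟩
      obtain ⟨y, hy, hd3⟩ := (slWa b (F1 b)).1 (spec1 b hne1)
      rw [(graph_char hGFg b y).1 hy] at hd3
      obtain ⟨β'', hpr'', hlt'', q'', hq''⟩ := (dAlpha _ _ _).2 hd3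
      have hne2 : ∃ u, u ∈ S.SliceAt Wb b :=
        ⟨β'', (slWb b β'').2 ⟨ϱ (f b), F1 b, (graph_char hGFg b _).2 rfl,
          (graph_char hG1g b _).2 rfl,
          (dMod2 (ϱ (j a)) (ϱ (f b)) (F1 b) β'').1 ⟨hpr'', hlt'', q'', hq''⟩⟩⟩
      obtain ⟨y2, u2, hy2, hu2, hd4⟩ := (slWb b (F2 b)).1 (spec2 b hne2)
      rw [(graph_char hGFg b y2).1 hy2, (graph_char hG1g b u2).1 hu2] at hd4
      obtain ⟨hprF, hltF, qF, hqF⟩ := (dMod2 _ _ _ _).2 hd4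
      have hne3 : ∃ u, u ∈ S.SliceAt Wq b :=
        ⟨qF, (slWq b qF).2 ⟨F1 b, F2 b, (graph_char hG1g b _).2 rfl,
          (graph_char hG2g b _).2 rfl, (dQ (ϱ (j a)) (F1 b) (F2 b) qF).1 hqF⟩⟩
      obtain ⟨y3, u3, hy3, hu3, hd4q⟩ := (slWq b (F3 b)).1 (spec3 b hne3)
      rw [(graph_char hG1g b y3).1 hy3, (graph_char hG2g b u3).1 hu3] at hd4q
      have hqFin := (dQ _ _ _ _).2 hd4q
      refine ⟨?_, ?_, ?_⟩
      · rw [tr_pair hrbij hr1 hradd hrmul, hg1, hg2]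
        exact hprF
      · rw [hrlt]
        simp only [hradd, hrmul, hr1, hg2]
        exact hltF
      · apply hrbij.1
        simp only [hradd, hrmul, hr1, hg1, hg2, hg3]
        exact hqFin
    intro hBa
    have cT : S.CodedFun 𝔛
        (fun b => ϱ (K.add K.one (K.mul (K.add (j a) K.one) (g2 b)))) :=
      cdAdd _ _ e1c (cdMul _ _ (cdAdd _ _ cg0 e1c) cg2)
    have hlt1' : SN.lt (π (fun _ : M => j a)) (π f) := by
      refine (hlt _ f cg0 hfC').2 (U_filter_up hU hBa (ltX _ f cg0 hfC') ?_)
      intro b hb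
      exact hb.1
    have hpair' : SN.PairRel (π f) (π g1) (π g2) := by
      refine (pairEq g1 g2 cg1 cg2).2 (U_filter_up hU hBa
        (eqlX (fun b => K.mul K.two (f b))
          (fun b => K.add (K.mul (K.add (g1 b) (g2 b)) (K.add (K.add (g1 b) (g2 b)) K.one))
            (K.mul K.two (g1 b)))
          (cdMul _ _ (cdConst K.two) hfC')
          (cdAdd _ _ (cdMul _ _ (cdAdd _ _ cg1 cg2) (cdAdd _ _ (cdAdd _ _ cg1 cg2) e1c))
            (cdMul _ _ (cdConst K.two) cg1))) ?_)
      intro b hb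
      exact (key b hb).1
    have hlt2' : SN.lt SN.one
        (SN.add SN.one (SN.mul (SN.add (π (fun _ : M => j a)) SN.one) (π g2))) := by
      rw [modTermEq g2 cg2, hone1]
      refine (hlt _ _ e1c cT).2 (U_filter_up hU hBa (ltX (fun _ : M => K.one)
        (fun b => K.add K.one (K.mul (K.add (j a) K.one) (g2 b))) e1c cT) ?_)
      intro b hb
      exact (key b hb).2.1
    have heq' : π g1 = SN.add (SN.mul (π g3)
        (SN.add SN.one (SN.mul (SN.add (π (fun _ : M => j a)) SN.one) (π g2)))) SN.one := by
      rw [modTermEq g2 cg2, pMul _ _ cg3 cT, hone1, pAdd _ _ (cdMul _ _ cg3 cT) e1c]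
      refine (heq g1 _ cg1 (cdAdd _ _ (cdMul _ _ cg3 cT) e1c)).2 (U_filter_up hU hBa
        (eqlX g1 (fun b => K.add (K.mul (g3 b)
          (K.add K.one (K.mul (K.add (j a) K.one) (g2 b)))) K.one) cg1
          (cdAdd _ _ (cdMul _ _ cg3 cT) e1c)) ?_)
      intro b hb
      exact (key b hb).2.2
    exact ⟨hlt1', π g1, π g2, hpair', hlt2', hlt2', π g3, heq'⟩

end Paper
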